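/- arXiv:1206.1143 — 2 statements merged into one kernel-verified Lean document; each statement's English description precedes it below -/
import Mathlib

section
/- Suppose the induced augmented tree (X, 𝔈) of a Moran set is rearrangeable. Then there exist a bijection σ : X → X and a constant c ≥ 0 such that |d_v(σ(x), σ(y)) − d(x,y)| ≤ c for all x, y ∈ X, where d is the graph metric of (X, 𝔈) and d_v is the graph metric of the tree (X, 𝔈_v); i.e., there is a near-isometry between (X, 𝔈) and (X, 𝔈_v). -/
open Metric Set Filter

attribute [local instance] Classical.propDecidable

noncomputable section

namespace MoranPaper

/-- Points of `ℝ^d`. -/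
abbrev Pt (d : ℕ) := EuclideanSpace ℝ (Fin d)

/-- `w` is an admissible word: the letter at (0-indexed) position `j`
(corresponding to step `j+1`) lies in `[1, n j]`, where `n j` encodes `n_{j+1}`. -/
def IsWord (n : ℕ → ℕ) (w : List ℕ) : Prop :=
  ∀ j (h : j < w.length), 1 ≤ w.get ⟨j, h⟩ ∧ w.get ⟨j, h⟩ ≤ n j

/-- The set `D_k` of words of length `k`. -/
def WordsLen (n : ℕ → ℕ) (k : ℕ) : Set (List ℕ) := {w | IsWord n w ∧ w.length = k}

/-- A Moran structure on the data `(J, (n_k), (r_k))`:  a family of sets `J_w`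
indexed by words, with `J_∅ = J`, each `J_w` a similar copy of `J`, children
contained in the parent with pairwise disjoint interiors, and prescribed
diameter ratios. -/
structure MoranStructure (d : ℕ) (J : Set (Pt d)) (n : ℕ → ℕ) (r : ℕ → ℝ) where
  Jset : List ℕ → Set (Pt d)
  root_eq : Jset [] = J
  similar : ∀ w, IsWord n w → ∃ (S : Pt d → Pt d) (c : ℝ), 0 < c ∧
      (∀ x y, dist (S x) (S y) = c * dist x y) ∧ Jset w = S '' J
  nested : ∀ w, IsWord n w → ∀ a, 1 ≤ a → a ≤ n w.length →
      Jset (w ++ [a]) ⊆ Jset w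
  disjoint_int : ∀ w, IsWord n w → ∀ a b, 1 ≤ a → a ≤ n w.length →
      1 ≤ b → b ≤ n w.length → a ≠ b →
      interior (Jset (w ++ [a])) ∩ interior (Jset (w ++ [b])) = ∅
  diam_ratio : ∀ w, IsWord n w → ∀ a, 1 ≤ a → a ≤ n w.length →
      Metric.diam (Jset (w ++ [a])) = r w.length * Metric.diam (Jset w)

/-- Standing hypotheses on the Moran data; `R` plays the role of `r = inf_k r_k > 0`. -/
structure MoranData (d : ℕ) (J : Set (Pt d)) (n : ℕ → ℕ) (r : ℕ → ℝ) (R : ℝ) : Prop where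
  dim_pos : 1 ≤ d
  compact : IsCompact J
  int_nonempty : (interior J).Nonempty
  two_le : ∀ k, 2 ≤ n k
  r_pos : ∀ k, 0 < r k
  r_lt_one : ∀ k, r k < 1
  nr_le : ∀ k, (n k : ℝ) * r k ≤ 1
  R_pos : 0 < R
  R_inf : R = ⨅ k, r k

/-- The Moran set `E = ⋂_k ⋃_{w ∈ D_k} J_w`. -/
def MoranSet {d : ℕ} {J : Set (Pt d)} {n : ℕ → ℕ} {r : ℕ → ℝ}
    (M : MoranStructure d J n r) : Set (Pt d) :=
  ⋂ k, ⋃ w ∈ WordsLen n k, M.Jset w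

/-- The product `r_1 ⋯ r_k`. -/
def prodR (r : ℕ → ℝ) (k : ℕ) : ℝ := ∏ j ∈ Finset.range k, r j

/-- The level `X_m`:  `X_0 = {∅}`, and for `m ≥ 1`,
`X_m = {w : r_1⋯r_k ≤ R^m < r_1⋯r_{k-1}}` where `k` is the length of `w`. -/
def XLevel (n : ℕ → ℕ) (r : ℕ → ℝ) (R : ℝ) (m : ℕ) : Set (List ℕ) :=
  if m = 0 then {([] : List ℕ)}
  else {w | IsWord n w ∧ prodR r w.length ≤ R ^ m ∧ R ^ m < prodR r (w.length - 1)}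

/-- The vertex set `X = ⋃_m X_m`. -/
def XV (n : ℕ → ℕ) (r : ℕ → ℝ) (R : ℝ) : Set (List ℕ) := ⋃ m, XLevel n r R m

/-- `v` is the parent (first ancestor) of `u`:  `v` is the initial segment
of `u` lying one level above `u`. -/
def IsParent (n : ℕ → ℕ) (r : ℕ → ℝ) (R : ℝ) (v u : List ℕ) : Prop :=
  v ≠ u ∧ v <+: u ∧ ∃ m, 1 ≤ m ∧ u ∈ XLevel n r R m ∧ v ∈ XLevel n r R (m - 1)

/-- Vertical edge relation `𝔈_v` (as an unordered relation). -/
def Evert (n : ℕ → ℕ) (r : ℕ → ℝ) (R : ℝ) (u v : List ℕ) : Prop :=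
  IsParent n r R u v ∨ IsParent n r R v u

variable {d : ℕ} {J : Set (Pt d)} {n : ℕ → ℕ} {r : ℕ → ℝ}

/-- Horizontal edge relation `𝔈_h`: distinct words on a common level `X_m`, `m ≥ 1`,
whose Moran pieces intersect. -/
def Ehor (M : MoranStructure d J n r) (R : ℝ) (u v : List ℕ) : Prop :=
  u ≠ v ∧ ∃ m, 1 ≤ m ∧ u ∈ XLevel n r R m ∧ v ∈ XLevel n r R m ∧
    (M.Jset u ∩ M.Jset v).Nonempty

/-- The induced augmented tree `(X, 𝔈)`, `𝔈 = 𝔈_v ∪ 𝔈_h`, as a graph on all words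
(words outside `X` are isolated vertices). -/
def AugGraph (M : MoranStructure d J n r) (R : ℝ) : SimpleGraph (List ℕ) where
  Adj u v := Evert n r R u v ∨ Ehor M R u v
  symm := by
    constructor
    rintro u v (h | ⟨hne, m, hm, hu, hv, hJ⟩)
    · exact Or.inl h.symm
    · exact Or.inr ⟨hne.symm, m, hm, hv, hu, by rwa [Set.inter_comm]⟩
  loopless := by
    constructor
    rintro u ((⟨h, -⟩ | ⟨h, -⟩) | ⟨h, -⟩) <;> exact h rfl

/-- The tree `(X, 𝔈_v)` with only the vertical edges. -/
def TreeGraph (n : ℕ → ℕ) (r : ℕ → ℝ) (R : ℝ) : SimpleGraph (List ℕ) where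
  Adj u v := Evert n r R u v
  symm := ⟨fun _ _ h => h.symm⟩
  loopless := by constructor; rintro u (⟨h, -⟩ | ⟨h, -⟩) <;> exact h rfl

/-- The graph `(X, 𝔈_h)` with only the horizontal edges. -/
def HorGraph (M : MoranStructure d J n r) (R : ℝ) : SimpleGraph (List ℕ) where
  Adj u v := Ehor M R u v
  symm := by
    constructor
    rintro u v ⟨hne, m, hm, hu, hv, hJ⟩
    exact ⟨hne.symm, m, hm, hv, hu, by rwa [Set.inter_comm]⟩
  loopless := by constructor; rintro u ⟨h, -⟩; exact h rfl

/-- Gromov product `⟨x,y⟩ = (d(o,x) + d(o,y) - d(x,y))/2` with respect to a base point `o`. -/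
def gromovD {V : Type*} (G : SimpleGraph V) (o x y : V) : ℝ :=
  ((G.dist o x : ℝ) + (G.dist o y : ℝ) - (G.dist x y : ℝ)) / 2

/-- Condition (H): there is `C' > 0` such that on every level `X_m` (`m ≥ 1`),
two pieces either intersect or are at distance at least `C' R^m`. -/
def CondH (M : MoranStructure d J n r) (R : ℝ) : Prop :=
  ∃ C' : ℝ, 0 < C' ∧ ∀ m, 1 ≤ m → ∀ u ∈ XLevel n r R m, ∀ v ∈ XLevel n r R m,
    (M.Jset u ∩ M.Jset v).Nonempty ∨
    ∀ p ∈ M.Jset u, ∀ q ∈ M.Jset v, C' * R ^ m ≤ dist p q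

/-- `T` is a horizontal connected component: a maximal subset of some level `X_m`
which is connected in the horizontal graph. -/
def IsHCC (M : MoranStructure d J n r) (R : ℝ) (T : Set (List ℕ)) : Prop :=
  ∃ m, T ⊆ XLevel n r R m ∧ ((HorGraph M R).induce T).Connected ∧
    ∀ T', T ⊆ T' → T' ⊆ XLevel n r R m → ((HorGraph M R).induce T').Connected → T' = T

/-- The common suffix set `Σ_m` of the level `X_m`: words `w` with `uw ∈ X_{m+1}`
for (some, equivalently all) `u ∈ X_m`. -/
def SigmaSet (n : ℕ → ℕ) (r : ℕ → ℝ) (R : ℝ) (m : ℕ) : Set (List ℕ) :=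
  {w | ∃ u ∈ XLevel n r R m, u ++ w ∈ XLevel n r R (m + 1)}

/-- The offspring set `TΣ_m ⊆ X_{m+1}` of a set `T ⊆ X_m`. -/
def TSigma (n : ℕ → ℕ) (r : ℕ → ℝ) (R : ℝ) (m : ℕ) (T : Set (List ℕ)) : Set (List ℕ) :=
  {x | ∃ u ∈ T, ∃ w ∈ SigmaSet n r R m, x = u ++ w}

/-- The augmented tree is rearrangeable:  horizontal connected components have
uniformly bounded cardinality, and for every horizontal connected component `T ⊆ X_m`
with `#T = b`, the offspring set `TΣ_m` can be partitioned into `b` groups (indexed by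
the elements of `T`), each group being a union of horizontal connected components and
having exactly `#Σ_m` elements. -/
def Rearrangeable (M : MoranStructure d J n r) (R : ℝ) : Prop :=
  (∃ L : ℕ, ∀ T, IsHCC M R T → T.Finite ∧ T.ncard ≤ L) ∧
  ∀ m T, T ⊆ XLevel n r R m → IsHCC M R T →
    ∃ g : List ℕ → List ℕ,
      (∀ x ∈ TSigma n r R m T, g x ∈ T) ∧
      (∀ Z, IsHCC M R Z → Z ⊆ TSigma n r R m T → ∀ x ∈ Z, ∀ y ∈ Z, g x = g y) ∧
      (∀ i ∈ T, {x ∈ TSigma n r R m T | g x = i}.ncard = (SigmaSet n r R m).ncard)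

/-- `C` is a (topological) connected component of `A`. -/
def IsRelCC {α : Type*} [TopologicalSpace α] (C A : Set α) : Prop :=
  ∃ x ∈ A, C = connectedComponentIn A x

/-- Condition (v): there is `L` such that any `T ⊆ D_{k-1}` for which `⋃_{i∈T} J_i`
is a connected component of `⋃_{i∈D_{k-1}} J_i` satisfies `#T ≤ L`. -/
def CondV (M : MoranStructure d J n r) : Prop :=
  ∃ L : ℕ, ∀ k, 1 ≤ k → ∀ T ⊆ WordsLen n (k - 1),
    IsRelCC (⋃ i ∈ T, M.Jset i) (⋃ i ∈ WordsLen n (k - 1), M.Jset i) →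
    T.Finite ∧ T.ncard ≤ L

/-- Condition (vi): for any such `T` (with `#T = b`), the connected components of
`⋃_{i∈T} ⋃_{j=1}^{n_k} J_{ij}` can be partitioned into `b` groups (indexed by the
elements of `T`) so that the union of the components in each group is a union of
exactly `n_k` of the sets `J_{ij}`. -/
def CondVI (M : MoranStructure d J n r) : Prop :=
  ∀ k, 1 ≤ k → ∀ T ⊆ WordsLen n (k - 1),
    IsRelCC (⋃ i ∈ T, M.Jset i) (⋃ i ∈ WordsLen n (k - 1), M.Jset i) →
    ∃ f : Set (Pt d) → List ℕ,
      (∀ C, IsRelCC C (⋃ u ∈ T, ⋃ j ∈ Set.Icc 1 (n (k - 1)), M.Jset (u ++ [j])) → f C ∈ T) ∧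
      ∀ i ∈ T, ∃ W : Finset (List ℕ × ℕ),
        (∀ p ∈ W, p.1 ∈ T ∧ 1 ≤ p.2 ∧ p.2 ≤ n (k - 1)) ∧
        W.card = n (k - 1) ∧
        (⋃ C ∈ {C | IsRelCC C (⋃ u ∈ T, ⋃ j ∈ Set.Icc 1 (n (k - 1)), M.Jset (u ++ [j]))
            ∧ f C = i}, C)
          = ⋃ p ∈ W, M.Jset (p.1 ++ [p.2])

/-- A geodesic ray of the induced augmented tree: `u_m ∈ X_m` and `u_m = (u_{m+1})⁻¹`. -/
def IsRay (n : ℕ → ℕ) (r : ℕ → ℝ) (R : ℝ) (u : ℕ → List ℕ) : Prop :=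
  (∀ m, u m ∈ XLevel n r R m) ∧ ∀ m, IsParent n r R (u m) (u (m + 1))

/-- Geodesic rays as a type. -/
def MRay (n : ℕ → ℕ) (r : ℕ → ℝ) (R : ℝ) := {u : ℕ → List ℕ // IsRay n r R u}

/-- `t(ξ,η) = liminf_m ⟨u_m, v_m⟩`, valued in `EReal`. -/
def tLim {V : Type*} (G : SimpleGraph V) (o : V) (u v : ℕ → V) : EReal :=
  Filter.liminf (fun m => ((gromovD G o (u m) (v m) : ℝ) : EReal)) Filter.atTop

/-- `R ^ t` for `t ∈ EReal`, with the convention `R ^ ∞ = 0`. -/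
def rpowE (R : ℝ) (t : EReal) : ℝ := if t = ⊤ then 0 else R ^ t.toReal

/-- The hyperbolic boundary of the induced augmented tree: equivalence classes of
geodesic rays, two rays being equivalent when `t(ξ,η) = ∞`. -/
def MBoundary (M : MoranStructure d J n r) (R : ℝ) :=
  Quot (fun ξ η : MRay n r R => tLim (AugGraph M R) [] ξ.1 η.1 = ⊤)

/-- The class of a ray in the hyperbolic boundary. -/
def mkB (M : MoranStructure d J n r) (R : ℝ) (ξ : MRay n r R) : MBoundary M R :=
  Quot.mk _ ξ

/-- The metric `ρ_a` on the hyperbolic boundary: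
`ρ_a(ξ̄,η̄) = exp(-a · inf{t(ξ,η) : ξ ∈ ξ̄, η ∈ η̄})` for distinct classes, and `0` otherwise. -/
def mrho (M : MoranStructure d J n r) (R a : ℝ) (p q : MBoundary M R) : ℝ :=
  if p = q then 0
  else Real.exp (-a * (sInf {s : EReal | ∃ ξ η : MRay n r R,
    mkB M R ξ = p ∧ mkB M R η = q ∧ s = tLim (AugGraph M R) [] ξ.1 η.1}).toReal)

/-- An abstract augmented tree in the sense of Kaimanovich: a rooted tree (encoded
by a parent map and a level function) together with a symmetric horizontal edge
relation `Eh` joining distinct vertices of a common level whose parents are equal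
or horizontally joined. -/
structure AugmentedTree (V : Type*) where
  root : V
  parent : V → V
  lvl : V → ℕ
  lvl_root : lvl root = 0
  lvl_parent : ∀ x, x ≠ root → lvl (parent x) + 1 = lvl x
  Eh : V → V → Prop
  Eh_symm : ∀ x y, Eh x y → Eh y x
  Eh_ne : ∀ x y, Eh x y → x ≠ y
  Eh_lvl : ∀ x y, Eh x y → lvl x = lvl y
  Eh_parent : ∀ x y, Eh x y → parent x = parent y ∨ Eh (parent x) (parent y)

namespace AugmentedTree

variable {V : Type*} (T : AugmentedTree V)

/-- The vertical (tree) edge relation. -/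
def Ev (x y : V) : Prop :=
  (x ≠ T.root ∧ T.parent x = y) ∨ (y ≠ T.root ∧ T.parent y = x)

/-- The graph `(X, 𝔈)`, `𝔈 = 𝔈_v ∪ 𝔈_h`. -/
def graph : SimpleGraph V where
  Adj x y := x ≠ y ∧ (T.Ev x y ∨ T.Eh x y)
  symm := by
    constructor
    rintro x y ⟨hne, h | h⟩
    · exact ⟨hne.symm, Or.inl h.symm⟩
    · exact ⟨hne.symm, Or.inr (T.Eh_symm x y h)⟩
  loopless := ⟨fun _ h => h.1 rfl⟩

/-- Gromov product `⟨x,y⟩ = (|x| + |y| - d(x,y))/2` (one has `d(o,x) = |x| = lvl x`). -/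
def gromov (x y : V) : ℝ :=
  ((T.lvl x : ℝ) + (T.lvl y : ℝ) - (T.graph.dist x y : ℝ)) / 2

/-- Gromov hyperbolicity. -/
def Hyperbolic : Prop :=
  ∃ δ : ℝ, 0 ≤ δ ∧ ∀ x y z : V,
    min (T.gromov x z) (T.gromov z y) - δ ≤ T.gromov x y

/-- A geodesic ray from the root: `x_0 = o` and `x_m = (x_{m+1})⁻¹`. -/
def IsRayT (x : ℕ → V) : Prop := x 0 = T.root ∧ ∀ m, T.parent (x (m + 1)) = x m

/-- Geodesic rays from the root, as a type. -/
def Ray := {x : ℕ → V // T.IsRayT x}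

/-- `t(ξ,η) = liminf_m ⟨x_m, y_m⟩`, valued in `EReal`. -/
def tvalT (ξ η : T.Ray) : EReal :=
  Filter.liminf (fun m => ((T.gromov (ξ.1 m) (η.1 m) : ℝ) : EReal)) Filter.atTop

/-- The hyperbolic boundary: classes of geodesic rays, two rays being equivalent
when `t(ξ,η) = ∞`. -/
def Boundary := Quot (fun ξ η : T.Ray => T.tvalT ξ η = ⊤)

/-- The class of a ray in the boundary. -/
def mkBd (ξ : T.Ray) : T.Boundary := Quot.mk _ ξ

/-- The metric `ρ_a` on the hyperbolic boundary. -/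
def rho (a : ℝ) (p q : T.Boundary) : ℝ :=
  if p = q then 0
  else Real.exp (-a * (sInf {s : EReal | ∃ ξ η : T.Ray,
    T.mkBd ξ = p ∧ T.mkBd η = q ∧ s = T.tvalT ξ η}).toReal)

end AugmentedTree

end MoranPaper

end
namespace MoranPf
open MoranPaper

attribute [local instance] Classical.propDecidable

noncomputable section
set_option linter.unusedSectionVars false

variable {d : ℕ} {J : Set (MoranPaper.Pt d)} {n : ℕ → ℕ} {r : ℕ → ℝ} {R : ℝ}

lemma R_le (hD : MoranData d J n r R) (k : ℕ) : R ≤ r k := by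
  rw [hD.R_inf]
  exact ciInf_le ⟨0, by rintro x ⟨k, rfl⟩; exact (hD.r_pos k).le⟩ k

lemma R_lt_one (hD : MoranData d J n r R) : R < 1 := lt_of_le_of_lt (R_le hD 0) (hD.r_lt_one 0)

lemma prodR_pos (hD : MoranData d J n r R) (k : ℕ) : 0 < prodR r k :=
  Finset.prod_pos (fun j _ => hD.r_pos j)

lemma prodR_succ (k : ℕ) : prodR r (k+1) = prodR r k * r k := Finset.prod_range_succ _ _

lemma prodR_anti (hD : MoranData d J n r R) {k k' : ℕ} (h : k ≤ k') :
    prodR r k' ≤ prodR r k := by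
  induction k' with
  | zero => simpa using (Nat.le_zero.mp h) ▸ le_refl _
  | succ k' ih =>
    rcases Nat.lt_or_ge k (k'+1) with h' | h'
    · have H := ih (Nat.lt_succ_iff.mp h')
      calc prodR r (k'+1) = prodR r k' * r k' := prodR_succ k'
        _ ≤ prodR r k' * 1 := by
            nlinarith [prodR_pos hD k', (hD.r_lt_one k').le, (hD.r_pos k').le]
        _ = prodR r k' := mul_one _
        _ ≤ prodR r k := H
    · have : k = k' + 1 := le_antisymm h h'
      simp [this]

lemma mem_XLevel_pos {w : List ℕ} {m : ℕ} (hm : 1 ≤ m) (hw : w ∈ XLevel n r R m) :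
    IsWord n w ∧ prodR r w.length ≤ R ^ m ∧ R ^ m < prodR r (w.length - 1) := by
  have : m ≠ 0 := by omega
  simpa [XLevel, this] using hw

lemma mem_XLevel_of (w : List ℕ) (m : ℕ) (hm : 1 ≤ m) (h1 : IsWord n w)
    (h2 : prodR r w.length ≤ R ^ m) (h3 : R ^ m < prodR r (w.length - 1)) :
    w ∈ XLevel n r R m := by
  have : m ≠ 0 := by omega
  simp only [XLevel, if_neg this]
  exact ⟨h1, h2, h3⟩

lemma XLevel_zero : XLevel n r R 0 = {([] : List ℕ)} := by simp [XLevel]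

lemma length_pos_of_mem (hD : MoranData d J n r R) {w : List ℕ} {m : ℕ} (hm : 1 ≤ m)
    (hw : w ∈ XLevel n r R m) : 1 ≤ w.length := by
  obtain ⟨-, h2, -⟩ := mem_XLevel_pos hm hw
  by_contra h
  have hw0 : w.length = 0 := by omega
  rw [hw0] at h2
  have h1 : prodR r 0 = 1 := by simp [prodR]
  rw [h1] at h2
  have : R ^ m < 1 := pow_lt_one₀ hD.R_pos.le (R_lt_one hD) (by omega)
  linarith

lemma length_eq_of_mem (hD : MoranData d J n r R) {w w' : List ℕ} {m : ℕ} (hm : 1 ≤ m)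
    (hw : w ∈ XLevel n r R m) (hw' : w' ∈ XLevel n r R m) : w.length = w'.length := by
  obtain ⟨-, h2, h3⟩ := mem_XLevel_pos hm hw
  obtain ⟨-, h2', h3'⟩ := mem_XLevel_pos hm hw'
  by_contra hne
  rcases Nat.lt_or_ge w.length w'.length with h | h
  · have : prodR r (w'.length - 1) ≤ prodR r w.length := prodR_anti hD (by omega)
    linarith
  · have h' : w'.length < w.length := by omega
    have : prodR r (w.length - 1) ≤ prodR r w'.length := prodR_anti hD (by omega)
    linarith

lemma level_unique (hD : MoranData d J n r R) {w : List ℕ} {m m' : ℕ}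
    (hw : w ∈ XLevel n r R m) (hw' : w ∈ XLevel n r R m') : m = m' := by
  by_contra hne
  have key : ∀ a b : ℕ, a < b → w ∈ XLevel n r R a → w ∈ XLevel n r R b → False := by
    intro a b hab ha hb
    rcases Nat.eq_zero_or_pos a with rfl | hapos
    · rw [XLevel_zero] at ha
      have : w = [] := ha
      subst this
      obtain ⟨-, h2, -⟩ := mem_XLevel_pos (by omega) hb
      simp only [List.length_nil] at h2
      have h1 : prodR r 0 = 1 := by simp [prodR]
      rw [h1] at h2
      have : R ^ b < 1 := pow_lt_one₀ hD.R_pos.le (R_lt_one hD) (by omega)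
      linarith
    · obtain ⟨-, h2, h3⟩ := mem_XLevel_pos hapos ha
      obtain ⟨-, h2', h3'⟩ := mem_XLevel_pos (by omega : 1 ≤ b) hb
      have hk : 1 ≤ w.length := length_pos_of_mem hD hapos ha
      have e1 : prodR r w.length = prodR r (w.length - 1) * r (w.length - 1) := by
        have h5 : w.length = (w.length - 1) + 1 := by omega
        rw [h5, prodR_succ]
        congr 2 <;> omega
      have hRb : R ^ b ≤ R ^ (a + 1) :=
        pow_le_pow_of_le_one hD.R_pos.le (R_lt_one hD).le (by omega)
      have hRa : R ^ (a+1) = R ^ a * R := pow_succ R a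
      have hlt : R ^ b < prodR r w.length := by
        have hRle := R_le hD (w.length - 1)
        have hRpos := hD.R_pos
        have hppos := prodR_pos hD (w.length - 1)
        have h5 : R ^ a * R < prodR r (w.length - 1) * R := by nlinarith
        have h6 : prodR r (w.length - 1) * R ≤ prodR r (w.length - 1) * r (w.length - 1) := by
          nlinarith
        rw [e1]; linarith
      linarith
  rcases Nat.lt_or_ge m m' with h | h
  · exact key m m' h hw hw'
  · exact key m' m (by omega) hw' hw

end
end MoranPf
namespace MoranPf
open MoranPaper

noncomputable section
set_option linter.unusedSectionVars false

variable {d : ℕ} {J : Set (MoranPaper.Pt d)} {n : ℕ → ℕ} {r : ℕ → ℝ} {R : ℝ}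

lemma isWord_prefix {v w : List ℕ} (hw : IsWord n w) (hvw : v <+: w) : IsWord n v := by
  intro j hj
  have hj' : j < w.length := lt_of_lt_of_le hj hvw.length_le
  have : v.get ⟨j, hj⟩ = w.get ⟨j, hj'⟩ := by
    simp only [List.get_eq_getElem]
    exact hvw.getElem hj
  rw [this]
  exact hw j hj'

/-- existence of the parent -/
lemma parent_exists (hD : MoranData d J n r R) {x : List ℕ} {m : ℕ} (hm : 1 ≤ m)
    (hx : x ∈ XLevel n r R m) :
    ∃ v, IsParent n r R v x ∧ v ∈ XLevel n r R (m - 1) := by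
  obtain ⟨hw, h2, h3⟩ := mem_XLevel_pos hm hx
  have hxlen : 1 ≤ x.length := length_pos_of_mem hD hm hx
  rcases Nat.eq_or_lt_of_le hm with h1 | h2m
  · -- m = 1, parent is []
    refine ⟨[], ⟨?_, ⟨x, by simp⟩, 1, le_refl _, ?_, ?_⟩, ?_⟩
    · intro h; rw [← h] at hxlen; simp at hxlen
    · rwa [← h1] at hx
    · have : m - 1 = 0 := by omega
      simp [this, XLevel]
    · have : m - 1 = 0 := by omega
      simp [this, XLevel]
  · -- m ≥ 2
    have hm1 : 1 ≤ m - 1 := by omega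
    have hP : prodR r x.length ≤ R ^ (m - 1) := by
      calc prodR r x.length ≤ R ^ m := h2
        _ ≤ R ^ (m-1) := pow_le_pow_of_le_one hD.R_pos.le (R_lt_one hD).le (by omega)
    set P : ℕ → Prop := fun j => prodR r j ≤ R ^ (m - 1) with hPdef
    have hex : ∃ j, P j := ⟨x.length, hP⟩
    set k' := Nat.find hex with hk'def
    have hk'le : k' ≤ x.length := Nat.find_le hP
    have hk'spec : prodR r k' ≤ R ^ (m-1) := Nat.find_spec hex
    have hk'pos : 1 ≤ k' := by
      by_contra h
      have hk0 : k' = 0 := by omega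
      rw [hk0] at hk'spec
      have h0 : prodR r 0 = 1 := by simp [prodR]
      rw [h0] at hk'spec
      have : R ^ (m-1) < 1 := pow_lt_one₀ hD.R_pos.le (R_lt_one hD) (by omega)
      linarith
    have hk'min : R ^ (m-1) < prodR r (k' - 1) := by
      by_contra h
      push_neg at h
      have := Nat.find_min hex (m := k' - 1) (by omega)
      exact this h
    set v := x.take k' with hvdef
    have hvlen : v.length = k' := by
      simp [hvdef, List.length_take]; omega
    have hvpre : v <+: x := List.take_prefix _ _
    have hvmem : v ∈ XLevel n r R (m - 1) := by
      apply mem_XLevel_of _ _ hm1 (isWord_prefix hw hvpre)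
      · rw [hvlen]; exact hk'spec
      · rw [hvlen]; exact hk'min
    have hvne : v ≠ x := by
      intro h
      have : m - 1 = m := level_unique hD (h ▸ hvmem) hx
      omega
    exact ⟨v, ⟨hvne, hvpre, m, hm, hx, hvmem⟩, hvmem⟩

lemma parent_unique (hD : MoranData d J n r R) {x v v' : List ℕ}
    (h : IsParent n r R v x) (h' : IsParent n r R v' x) : v = v' := by
  obtain ⟨hne, hpre, m, hm, hxm, hvm⟩ := h
  obtain ⟨hne', hpre', m', hm', hxm', hvm'⟩ := h'
  have hmm : m = m' := level_unique hD hxm hxm'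
  subst hmm
  rcases Nat.eq_or_lt_of_le hm with h1 | h2
  · rw [← h1] at hvm hvm'
    simp only [Nat.sub_self, XLevel_zero] at hvm hvm'
    rw [Set.mem_singleton_iff] at hvm hvm'
    rw [hvm, hvm']
  · have hlen : v.length = v'.length := length_eq_of_mem hD (by omega) hvm hvm'
    rw [List.prefix_iff_eq_take] at hpre hpre'
    rw [hpre, hpre', hlen]

/-- the parent function -/
def par (n : ℕ → ℕ) (r : ℕ → ℝ) (R : ℝ) (x : List ℕ) : List ℕ :=
  if h : ∃ v, IsParent n r R v x then h.choose else []

lemma par_spec (hD : MoranData d J n r R) {x : List ℕ} {m : ℕ} (hm : 1 ≤ m)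
    (hx : x ∈ XLevel n r R m) :
    IsParent n r R (par n r R x) x ∧ par n r R x ∈ XLevel n r R (m - 1) := by
  obtain ⟨v, hv1, hv2⟩ := parent_exists hD hm hx
  have hex : ∃ v, IsParent n r R v x := ⟨v, hv1⟩
  have hpe : par n r R x = hex.choose := by
    simp only [par, dif_pos hex]
  have hch := hex.choose_spec
  rw [hpe]
  have he : hex.choose = v := parent_unique hD hch hv1
  rw [he]
  exact ⟨hv1, hv2⟩

lemma par_eq (hD : MoranData d J n r R) {x v : List ℕ} (h : IsParent n r R v x) :
    par n r R x = v := by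
  obtain ⟨m, hm, hxm, -⟩ := h.2.2
  exact parent_unique hD (par_spec hD hm hxm).1 h

/-- children: appending a common suffix -/
lemma append_mem_XLevel (hD : MoranData d J n r R) {u w : List ℕ} {m : ℕ}
    (hu : u ∈ XLevel n r R m) (hw : w ∈ SigmaSet n r R m) :
    u ++ w ∈ XLevel n r R (m + 1) := by
  obtain ⟨u₀, hu₀, hu₀w⟩ := hw
  rcases Nat.eq_zero_or_pos m with rfl | hm
  · rw [XLevel_zero] at hu hu₀
    rw [Set.mem_singleton_iff] at hu hu₀
    rw [hu, hu₀] at *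
    simpa using hu₀w
  · have hlen : u.length = u₀.length := length_eq_of_mem hD hm hu hu₀
    obtain ⟨hw1, hw2, hw3⟩ := mem_XLevel_pos (by omega : 1 ≤ m + 1) hu₀w
    obtain ⟨hu1, -, -⟩ := mem_XLevel_pos hm hu
    apply mem_XLevel_of _ _ (by omega)
    · -- IsWord n (u ++ w)
      intro j hj
      simp only [List.length_append] at hj
      by_cases hj' : j < u.length
      · have : (u ++ w).get ⟨j, by simpa [List.length_append] using hj⟩ = u.get ⟨j, hj'⟩ := by
          simp [List.getElem_append, hj']
        rw [this]; exact hu1 j hj'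
      · have hj2 : j - u.length < w.length := by omega
        have e1 : (u ++ w).get ⟨j, by simpa [List.length_append] using hj⟩
            = w.get ⟨j - u.length, hj2⟩ := by
          simp only [List.get_eq_getElem]
          rw [List.getElem_append_right (by omega)]
        have hj0 : j < (u₀ ++ w).length := by simp [List.length_append]; omega
        have e2 : (u₀ ++ w).get ⟨j, hj0⟩ = w.get ⟨j - u.length, hj2⟩ := by
          simp only [List.get_eq_getElem]
          rw [List.getElem_append_right (by omega)]
          congr 1; omega
        rw [e1, ← e2]
        exact hw1 j hj0
    · have : (u ++ w).length = (u₀ ++ w).length := by simp [List.length_append, hlen]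
      rw [this]; exact hw2
    · have : (u ++ w).length = (u₀ ++ w).length := by simp [List.length_append, hlen]
      rw [this]; exact hw3

lemma sigma_ne_nil (hD : MoranData d J n r R) {w : List ℕ} {m : ℕ}
    (hw : w ∈ SigmaSet n r R m) : w ≠ [] := by
  obtain ⟨u₀, hu₀, hu₀w⟩ := hw
  intro h
  subst h
  simp only [List.append_nil] at hu₀w
  have := level_unique hD hu₀ hu₀w
  omega

lemma par_append (hD : MoranData d J n r R) {u w : List ℕ} {m : ℕ}
    (hu : u ∈ XLevel n r R m) (hw : w ∈ SigmaSet n r R m) :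
    par n r R (u ++ w) = u := by
  apply par_eq hD
  refine ⟨?_, ⟨w, rfl⟩, m + 1, by omega, append_mem_XLevel hD hu hw, by simpa using hu⟩
  intro h
  have hwnil : w = [] := by
    have hl := congrArg List.length h
    simp only [List.length_append] at hl
    have : w.length = 0 := by omega
    exact List.length_eq_zero_iff.mp this
  exact sigma_ne_nil hD hw hwnil

lemma exists_sigma_decomp (hD : MoranData d J n r R) {x : List ℕ} {m : ℕ}
    (hx : x ∈ XLevel n r R (m + 1)) :
    ∃ w ∈ SigmaSet n r R m, x = par n r R x ++ w ∧ par n r R x ∈ XLevel n r R m := by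
  obtain ⟨hp, hpm⟩ := par_spec hD (by omega : 1 ≤ m + 1) hx
  simp only [Nat.add_sub_cancel] at hpm
  obtain ⟨-, hpre, -⟩ := hp
  obtain ⟨t, ht⟩ := hpre
  exact ⟨t, ⟨par n r R x, hpm, by rwa [ht]⟩, ht.symm, hpm⟩

end
end MoranPf
namespace MoranPf
open MoranPaper

noncomputable section
set_option linter.unusedSectionVars false

variable {d : ℕ} {J : Set (MoranPaper.Pt d)} {n : ℕ → ℕ} {r : ℕ → ℝ} {R : ℝ}

lemma jset_prefix (M : MoranStructure d J n r) {u v : List ℕ} (hu : IsWord n u)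
    (hvu : v <+: u) : M.Jset u ⊆ M.Jset v := by
  induction u using List.reverseRecOn with
  | nil =>
    have : v = [] := List.prefix_nil.mp hvu
    rw [this]
  | append_singleton us a ih =>
    by_cases hv : v = us ++ [a]
    · rw [hv]
    · have hvlen : v.length ≤ us.length := by
        have h1 := hvu.length_le
        simp only [List.length_append, List.length_singleton] at h1
        rcases Nat.lt_or_ge v.length (us.length + 1) with h | h
        · omega
        · exfalso
          have : v.length = us.length + 1 := by omega
          have := List.prefix_iff_eq_take.mp hvu
          rw [this] at hv
          apply hv
          rw [‹v.length = us.length + 1›]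
          simp [List.take_of_length_le, List.length_append]
      have hvus : v <+: us := by
        have h1 := List.prefix_iff_eq_take.mp hvu
        have h2 : (us ++ [a]).take v.length = us.take v.length := by
          rw [List.take_append]
          have : v.length - us.length = 0 := by omega
          simp [this]
        rw [h2] at h1
        rw [h1]
        exact List.take_prefix _ _
      have huword : IsWord n us := isWord_prefix hu (List.prefix_append _ _)
      have hsub : M.Jset (us ++ [a]) ⊆ M.Jset us := by
        apply M.nested us huword a
        · have := hu us.length (by simp)
          have e : (us ++ [a]).get ⟨us.length, by simp⟩ = a := by
            simp [List.get_eq_getElem]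
          rw [e] at this
          exact this.1
        · have := hu us.length (by simp)
          have e : (us ++ [a]).get ⟨us.length, by simp⟩ = a := by
            simp [List.get_eq_getElem]
          rw [e] at this
          exact this.2
      exact fun x hx => ih huword hvus (hsub hx)

variable (M : MoranStructure d J n r)

/-- the horizontal reachability class -/
def Hcls (M : MoranStructure d J n r) (R : ℝ) (z : List ℕ) : Set (List ℕ) :=
  {y | (HorGraph M R).Reachable z y}

lemma mem_Hcls_self (z : List ℕ) : z ∈ Hcls M R z := SimpleGraph.Reachable.refl z

lemma ehor_parent (hD : MoranData d J n r R) {u v : List ℕ} (h : Ehor M R u v) :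
    par n r R u = par n r R v ∨ Ehor M R (par n r R u) (par n r R v) := by
  obtain ⟨hne, m, hm, hu, hv, hJ⟩ := h
  obtain ⟨hpu, hpum⟩ := par_spec hD hm hu
  obtain ⟨hpv, hpvm⟩ := par_spec hD hm hv
  rcases Nat.eq_or_lt_of_le hm with h1 | h2
  · left
    rw [← h1] at hpum hpvm
    simp only [Nat.sub_self, XLevel_zero, Set.mem_singleton_iff] at hpum hpvm
    rw [hpum, hpvm]
  · by_cases hpp : par n r R u = par n r R v
    · exact Or.inl hpp
    · right
      refine ⟨hpp, m - 1, by omega, hpum, hpvm, ?_⟩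
      obtain ⟨x, hx1, hx2⟩ := hJ
      have h1 : M.Jset u ⊆ M.Jset (par n r R u) :=
        jset_prefix M (mem_XLevel_pos hm hu).1 hpu.2.1
      have h2 : M.Jset v ⊆ M.Jset (par n r R v) :=
        jset_prefix M (mem_XLevel_pos hm hv).1 hpv.2.1
      exact ⟨x, h1 hx1, h2 hx2⟩

lemma reach_parent (hD : MoranData d J n r R) {u v : List ℕ}
    (h : (HorGraph M R).Reachable u v) :
    (HorGraph M R).Reachable (par n r R u) (par n r R v) := by
  obtain ⟨p⟩ := h
  induction p with
  | nil => exact SimpleGraph.Reachable.refl _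
  | cons huv q ih =>
    rcases ehor_parent M hD huv with h1 | h1
    · rw [h1]; exact ih
    · exact (SimpleGraph.Adj.reachable h1).trans ih

lemma reach_level (hD : MoranData d J n r R) {u v : List ℕ} {m : ℕ}
    (hu : u ∈ XLevel n r R m) (h : (HorGraph M R).Reachable u v) : v ∈ XLevel n r R m := by
  obtain ⟨p⟩ := h
  induction p with
  | nil => exact hu
  | @cons a b c hab q ih =>
    apply ih
    obtain ⟨-, m', hm', ha, hb, -⟩ := hab
    have : m = m' := level_unique hD hu ha
    rw [this]; exact hb

lemma Hcls_subset (hD : MoranData d J n r R) {u : List ℕ} {m : ℕ} (hu : u ∈ XLevel n r R m) :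
    Hcls M R u ⊆ XLevel n r R m := fun _ hy => reach_level M hD hu hy

lemma Hcls_eq_of_reach {u v : List ℕ} (h : (HorGraph M R).Reachable u v) :
    Hcls M R u = Hcls M R v := by
  ext y
  exact ⟨fun hy => h.symm.trans hy, fun hy => h.trans hy⟩

/-- the inclusion homomorphism from an induced subgraph -/
def inducedHom (G : SimpleGraph (List ℕ)) (S : Set (List ℕ)) : G.induce S →g G :=
  ⟨Subtype.val, fun {x y} h => h⟩

lemma reach_of_induce_reach {G : SimpleGraph (List ℕ)} {S : Set (List ℕ)}
    {a b : S} (h : (G.induce S).Reachable a b) : G.Reachable a.1 b.1 :=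
  h.map (inducedHom G S)

lemma induce_reach_of_walk {G : SimpleGraph (List ℕ)} {S : Set (List ℕ)} :
    ∀ {a b : List ℕ} (p : G.Walk a b) (hp : ∀ c ∈ p.support, c ∈ S),
    (G.induce S).Reachable ⟨a, hp a p.start_mem_support⟩ ⟨b, hp b p.end_mem_support⟩ := by
  intro a b p
  induction p with
  | nil => intro h; exact SimpleGraph.Reachable.refl _
  | @cons a b c hab q ih =>
    intro h
    have hbS : b ∈ S := h b (by simp [SimpleGraph.Walk.support_cons, q.start_mem_support])
    have haS : a ∈ S := h a (by simp [SimpleGraph.Walk.support_cons])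
    have hq : ∀ c ∈ q.support, c ∈ S := fun x hx =>
      h x (by simp [SimpleGraph.Walk.support_cons, hx])
    have step : (G.induce S).Adj ⟨a, haS⟩ ⟨b, hbS⟩ := hab
    exact (SimpleGraph.Adj.reachable step).trans (ih hq)

lemma walk_support_reach {G : SimpleGraph (List ℕ)} :
    ∀ {a b : List ℕ} (p : G.Walk a b) {c : List ℕ}, c ∈ p.support → G.Reachable a c := by
  intro a b p
  induction p with
  | nil =>
    intro c hc
    simp only [SimpleGraph.Walk.support_nil, List.mem_singleton] at hc
    rw [hc]
  | @cons a b bb hab q ih =>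
    intro c hc
    simp only [SimpleGraph.Walk.support_cons, List.mem_cons] at hc
    rcases hc with rfl | hc
    · exact SimpleGraph.Reachable.refl _
    · exact (SimpleGraph.Adj.reachable hab).trans (ih hc)

lemma Hcls_isHCC (hD : MoranData d J n r R) {u : List ℕ} {m : ℕ} (hu : u ∈ XLevel n r R m) :
    IsHCC M R (Hcls M R u) := by
  refine ⟨m, Hcls_subset M hD hu, ?_, ?_⟩
  · have hne : Nonempty ↥(Hcls M R u) := ⟨⟨u, mem_Hcls_self M u⟩⟩
    refine SimpleGraph.Connected.mk ?_
    rintro ⟨x, hx⟩ ⟨y, hy⟩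
    have hxy : (HorGraph M R).Reachable x y := hx.symm.trans hy
    obtain ⟨p⟩ := hxy
    have hsupp : ∀ c ∈ p.support, c ∈ Hcls M R u := fun c hc =>
      hx.trans (walk_support_reach p hc)
    exact induce_reach_of_walk p hsupp
  · intro T' hsub hsub' hconn
    apply Set.Subset.antisymm _ hsub
    intro y hy
    have hu' : u ∈ T' := hsub (mem_Hcls_self M u)
    have hr : ((HorGraph M R).induce T').Reachable ⟨u, hu'⟩ ⟨y, hy⟩ :=
      hconn.preconnected _ _
    exact reach_of_induce_reach hr

lemma isHCC_eq_Hcls (hD : MoranData d J n r R) {T : Set (List ℕ)} (hT : IsHCC M R T)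
    {x : List ℕ} (hx : x ∈ T) : T = Hcls M R x := by
  obtain ⟨m, hsub, hconn, hmax⟩ := hT
  have hTsub : T ⊆ Hcls M R x := by
    intro y hy
    have : ((HorGraph M R).induce T).Reachable ⟨x, hx⟩ ⟨y, hy⟩ := hconn.preconnected _ _
    exact reach_of_induce_reach this
  have hxm : x ∈ XLevel n r R m := hsub hx
  have := Hcls_isHCC M hD hxm
  obtain ⟨m', hsub', hconn', -⟩ := this
  exact (hmax (Hcls M R x) hTsub (Hcls_subset M hD hxm) hconn').symm

end
end MoranPf
namespace MoranPf
open MoranPaper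

noncomputable section
set_option linter.unusedSectionVars false

variable {d : ℕ} {J : Set (MoranPaper.Pt d)} {n : ℕ → ℕ} {r : ℕ → ℝ} {R : ℝ}

lemma finite_wordsLen (n : ℕ → ℕ) (k : ℕ) : {w : List ℕ | IsWord n w ∧ w.length = k}.Finite := by
  induction k with
  | zero =>
    apply Set.Finite.subset (Set.finite_singleton ([] : List ℕ))
    rintro w ⟨-, hw⟩
    simp [List.length_eq_zero_iff.mp hw]
  | succ k ih =>
    apply Set.Finite.subset (Set.Finite.image2 (fun (us : List ℕ) (a : ℕ) => us ++ [a]) ih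
      (Set.finite_Icc 1 (n k)))
    rintro w ⟨hw, hwlen⟩
    have hne : w ≠ [] := by intro h; rw [h] at hwlen; simp at hwlen
    have hdec := List.dropLast_concat_getLast hne
    refine ⟨w.dropLast, ⟨isWord_prefix hw (List.dropLast_prefix w), by
      simp [List.length_dropLast, hwlen]⟩, w.getLast hne, ?_, hdec⟩
    have hk : k < w.length := by omega
    have := hw k hk
    have e : w.get ⟨k, hk⟩ = w.getLast hne := by
      rw [List.getLast_eq_getElem]
      simp only [List.get_eq_getElem]
      congr 1
      omega
    rw [e] at this
    simpa using this

lemma finite_XLevel (hD : MoranData d J n r R) (m : ℕ) : (XLevel n r R m).Finite := by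
  rcases Nat.eq_zero_or_pos m with rfl | hm
  · rw [XLevel_zero]; exact Set.finite_singleton _
  · by_cases hne : (XLevel n r R m).Nonempty
    · obtain ⟨x₀, hx₀⟩ := hne
      apply Set.Finite.subset (finite_wordsLen n x₀.length)
      intro w hw
      exact ⟨(mem_XLevel_pos hm hw).1, length_eq_of_mem hD hm hw hx₀⟩
    · rw [Set.not_nonempty_iff_eq_empty] at hne
      rw [hne]; exact Set.finite_empty

lemma finite_SigmaSet (hD : MoranData d J n r R) (m : ℕ) : (SigmaSet n r R m).Finite := by
  by_cases hne : (XLevel n r R m).Nonempty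
  · obtain ⟨u₁, hu₁⟩ := hne
    apply Set.Finite.subset ((finite_XLevel hD (m+1)).image (fun l => List.drop u₁.length l))
    rintro w ⟨u, hu, huw⟩
    refine ⟨u ++ w, huw, ?_⟩
    have : u.length = u₁.length := by
      rcases Nat.eq_zero_or_pos m with rfl | hm
      · rw [XLevel_zero] at hu hu₁
        rw [Set.mem_singleton_iff] at hu hu₁; rw [hu, hu₁]
      · exact length_eq_of_mem hD hm hu hu₁
    rw [← this]
    simp
  · rw [Set.not_nonempty_iff_eq_empty] at hne
    have : SigmaSet n r R m = ∅ := by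
      ext w; simp only [SigmaSet, Set.mem_setOf_eq, Set.mem_empty_iff_false, iff_false]
      rintro ⟨u, hu, -⟩
      rw [hne] at hu; exact hu
    rw [this]; exact Set.finite_empty

lemma exists_bijOn {s t : Set (List ℕ)} (hs : s.Finite) (ht : t.Finite)
    (h : s.ncard = t.ncard) : ∃ f : List ℕ → List ℕ, Set.BijOn f s t := by
  haveI := hs.fintype
  haveI := ht.fintype
  have hcard : Fintype.card ↥s = Fintype.card ↥t := by
    rw [← Set.toFinset_card, ← Set.toFinset_card]
    rw [← Set.ncard_eq_toFinset_card' s, ← Set.ncard_eq_toFinset_card' t]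
    exact h
  obtain e := Fintype.equivOfCardEq hcard
  refine ⟨fun a => if ha : a ∈ s then (e ⟨a, ha⟩ : List ℕ) else [], ?_, ?_, ?_⟩
  · intro a ha
    simp only [dif_pos ha]
    exact (e ⟨a, ha⟩).2
  · intro a ha b hb hab
    simp only [dif_pos ha, dif_pos hb] at hab
    have : e ⟨a, ha⟩ = e ⟨b, hb⟩ := Subtype.ext hab
    have := e.injective this
    exact congrArg Subtype.val this
  · intro b hb
    refine ⟨(e.symm ⟨b, hb⟩ : List ℕ), (e.symm ⟨b, hb⟩).2, ?_⟩
    have hmem : ((e.symm ⟨b, hb⟩ : List ℕ)) ∈ s := (e.symm ⟨b, hb⟩).2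
    simp only [dif_pos hmem]
    have : (⟨(e.symm ⟨b, hb⟩ : List ℕ), hmem⟩ : ↥s) = e.symm ⟨b, hb⟩ := by
      apply Subtype.ext; rfl
    rw [this, Equiv.apply_symm_apply]

variable (M : MoranStructure d J n r)

/-- selected rearrangement function -/
def gsel (M : MoranStructure d J n r) (R : ℝ) (hre : Rearrangeable M R) (m : ℕ)
    (T : Set (List ℕ)) : List ℕ → List ℕ :=
  if h : T ⊆ XLevel n r R m ∧ IsHCC M R T then (hre.2 m T h.1 h.2).choose else id

lemma gsel_spec {hre : Rearrangeable M R} {m : ℕ} {T : Set (List ℕ)}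
    (h1 : T ⊆ XLevel n r R m) (h2 : IsHCC M R T) :
    (∀ x ∈ TSigma n r R m T, gsel M R hre m T x ∈ T) ∧
    (∀ Z, IsHCC M R Z → Z ⊆ TSigma n r R m T →
      ∀ x ∈ Z, ∀ y ∈ Z, gsel M R hre m T x = gsel M R hre m T y) ∧
    (∀ i ∈ T, {x ∈ TSigma n r R m T | gsel M R hre m T x = i}.ncard
      = (SigmaSet n r R m).ncard) := by
  have h : T ⊆ XLevel n r R m ∧ IsHCC M R T := ⟨h1, h2⟩
  have e : gsel M R hre m T = (hre.2 m T h.1 h.2).choose := by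
    simp only [gsel, dif_pos h]
  rw [e]
  exact (hre.2 m T h.1 h.2).choose_spec

def Gm (M : MoranStructure d J n r) (R : ℝ) (hre : Rearrangeable M R) (m : ℕ)
    (x : List ℕ) : List ℕ :=
  gsel M R hre m (Hcls M R (par n r R x)) x

def Fib (M : MoranStructure d J n r) (R : ℝ) (hre : Rearrangeable M R) (m : ℕ)
    (u : List ℕ) : Set (List ℕ) :=
  {x ∈ TSigma n r R m (Hcls M R u) | gsel M R hre m (Hcls M R u) x = u}

lemma TSigma_eq (hD : MoranData d J n r R) {z : List ℕ} {m : ℕ} (hz : z ∈ XLevel n r R m) :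
    TSigma n r R m (Hcls M R z)
      = {x | x ∈ XLevel n r R (m+1) ∧ par n r R x ∈ Hcls M R z} := by
  ext x
  constructor
  · rintro ⟨u, hu, w, hw, rfl⟩
    have hum : u ∈ XLevel n r R m := Hcls_subset M hD hz hu
    exact ⟨append_mem_XLevel hD hum hw, by rwa [par_append hD hum hw]⟩
  · rintro ⟨hx, hpx⟩
    obtain ⟨w, hw, hdec, hpm⟩ := exists_sigma_decomp hD hx
    exact ⟨par n r R x, hpx, w, hw, hdec⟩

variable {hre : Rearrangeable M R}

lemma Gm_mem (hD : MoranData d J n r R) {x : List ℕ} {m : ℕ} (hx : x ∈ XLevel n r R (m+1)) :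
    Gm M R hre m x ∈ Hcls M R (par n r R x) ∧ x ∈ Fib M R hre m (Gm M R hre m x)
      ∧ Gm M R hre m x ∈ XLevel n r R m := by
  obtain ⟨w, hw, hdec, hpm⟩ := exists_sigma_decomp hD hx
  set z := par n r R x with hzdef
  have h1 : Hcls M R z ⊆ XLevel n r R m := Hcls_subset M hD hpm
  have h2 : IsHCC M R (Hcls M R z) := Hcls_isHCC M hD hpm
  obtain ⟨p1, p2, p3⟩ := gsel_spec M h1 h2
  have hxT : x ∈ TSigma n r R m (Hcls M R z) := by
    rw [TSigma_eq M hD hpm]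
    exact ⟨hx, mem_Hcls_self M z⟩
  have hu : Gm M R hre m x ∈ Hcls M R z := p1 x hxT
  have hcls : Hcls M R z = Hcls M R (Gm M R hre m x) := Hcls_eq_of_reach M hu
  refine ⟨hu, ⟨?_, ?_⟩, h1 hu⟩
  · rw [← hcls]; exact hxT
  · rw [← hcls]; rfl

lemma mem_Fib_imp (hD : MoranData d J n r R) {x u : List ℕ} {m : ℕ} (hu : u ∈ XLevel n r R m)
    (hx : x ∈ Fib M R hre m u) :
    x ∈ XLevel n r R (m+1) ∧ par n r R x ∈ Hcls M R u ∧ u = Gm M R hre m x := by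
  obtain ⟨hxT, hgx⟩ := hx
  rw [TSigma_eq M hD hu] at hxT
  obtain ⟨hx1, hx2⟩ := hxT
  have hcls : Hcls M R u = Hcls M R (par n r R x) := Hcls_eq_of_reach M hx2
  refine ⟨hx1, hx2, ?_⟩
  rw [← hgx, Gm, ← hcls]

lemma Gm_const (hD : MoranData d J n r R) {x y : List ℕ} {m : ℕ}
    (hx : x ∈ XLevel n r R (m+1)) (hr : (HorGraph M R).Reachable x y) :
    Gm M R hre m x = Gm M R hre m y := by
  have hy : y ∈ XLevel n r R (m+1) := reach_level M hD hx hr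
  have hpr : (HorGraph M R).Reachable (par n r R x) (par n r R y) := reach_parent M hD hr
  have hpm : par n r R x ∈ XLevel n r R m := by
    have := (par_spec hD (by omega : 1 ≤ m + 1) hx).2
    simpa using this
  have hcls : Hcls M R (par n r R x) = Hcls M R (par n r R y) := Hcls_eq_of_reach M hpr
  have h1 : Hcls M R (par n r R x) ⊆ XLevel n r R m := Hcls_subset M hD hpm
  have h2 : IsHCC M R (Hcls M R (par n r R x)) := Hcls_isHCC M hD hpm
  obtain ⟨-, p2, -⟩ := gsel_spec M h1 h2
  have hZ : IsHCC M R (Hcls M R x) := Hcls_isHCC M hD hx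
  have hZsub : Hcls M R x ⊆ TSigma n r R m (Hcls M R (par n r R x)) := by
    intro z hz
    rw [TSigma_eq M hD hpm]
    exact ⟨reach_level M hD hx hz, reach_parent M hD hz⟩
  have := p2 (Hcls M R x) hZ hZsub x (mem_Hcls_self M x) y hr
  rw [Gm, Gm, ← hcls]
  exact this

lemma Fib_ncard (hD : MoranData d J n r R) {u : List ℕ} {m : ℕ} (hu : u ∈ XLevel n r R m) :
    (Fib M R hre m u).ncard = (SigmaSet n r R m).ncard := by
  have h1 : Hcls M R u ⊆ XLevel n r R m := Hcls_subset M hD hu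
  have h2 : IsHCC M R (Hcls M R u) := Hcls_isHCC M hD hu
  obtain ⟨-, -, p3⟩ := gsel_spec M h1 h2
  exact p3 u (mem_Hcls_self M u)

lemma Fib_finite (hD : MoranData d J n r R) {u : List ℕ} {m : ℕ} (hu : u ∈ XLevel n r R m) :
    (Fib M R hre m u).Finite := by
  apply Set.Finite.subset (finite_XLevel hD (m+1))
  intro x hx
  exact (mem_Fib_imp M hD hu hx).1

/-- the level-wise chosen bijection to suffixes -/
def hsel (M : MoranStructure d J n r) (R : ℝ) (hre : Rearrangeable M R) (m : ℕ)
    (u : List ℕ) : List ℕ → List ℕ :=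
  if h : ∃ f : List ℕ → List ℕ, Set.BijOn f (Fib M R hre m u) (SigmaSet n r R m)
    then h.choose else id

lemma hsel_spec (hD : MoranData d J n r R) {u : List ℕ} {m : ℕ} (hu : u ∈ XLevel n r R m) :
    Set.BijOn (hsel M R hre m u) (Fib M R hre m u) (SigmaSet n r R m) := by
  have hex : ∃ f : List ℕ → List ℕ, Set.BijOn f (Fib M R hre m u) (SigmaSet n r R m) :=
    exists_bijOn (Fib_finite M hD hu) (finite_SigmaSet hD m) (Fib_ncard M hD hu)
  have e : hsel M R hre m u = hex.choose := by simp only [hsel, dif_pos hex]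
  rw [e]
  exact hex.choose_spec

end
end MoranPf
namespace MoranPf
open MoranPaper

noncomputable section
set_option linter.unusedSectionVars false

variable {d : ℕ} {J : Set (MoranPaper.Pt d)} {n : ℕ → ℕ} {r : ℕ → ℝ} {R : ℝ}
variable (M : MoranStructure d J n r)

/-- the level-wise rearrangement bijection -/
def sLvl (M : MoranStructure d J n r) (R : ℝ) (hre : Rearrangeable M R) : ℕ → List ℕ → List ℕ
  | 0 => id
  | (m+1) => fun x =>
      sLvl M R hre m (Gm M R hre m x) ++ hsel M R hre m (Gm M R hre m x) x

variable {hre : Rearrangeable M R}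

lemma length_eq_of_mem' (hD : MoranData d J n r R) {w w' : List ℕ} {m : ℕ}
    (hw : w ∈ XLevel n r R m) (hw' : w' ∈ XLevel n r R m) : w.length = w'.length := by
  rcases Nat.eq_zero_or_pos m with rfl | hm
  · rw [XLevel_zero, Set.mem_singleton_iff] at hw hw'
    rw [hw, hw']
  · exact length_eq_of_mem hD hm hw hw'

lemma sLvl_bijOn (hD : MoranData d J n r R) :
    ∀ m, Set.BijOn (sLvl M R hre m) (XLevel n r R m) (XLevel n r R m) := by
  intro m
  induction m with
  | zero => simpa [sLvl] using Set.bijOn_id (XLevel n r R 0)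
  | succ m ih =>
    refine ⟨?_, ?_, ?_⟩
    · intro x hx
      obtain ⟨hu1, hxF, hu2⟩ := Gm_mem M hD hx
      have h1 : sLvl M R hre m (Gm M R hre m x) ∈ XLevel n r R m := ih.mapsTo hu2
      have h2 : hsel M R hre m (Gm M R hre m x) x ∈ SigmaSet n r R m :=
        (hsel_spec M hD hu2).mapsTo hxF
      exact append_mem_XLevel hD h1 h2
    · intro x hx x' hx' heq
      obtain ⟨hu1, hxF, hu2⟩ := Gm_mem M hD hx
      obtain ⟨hu1', hxF', hu2'⟩ := Gm_mem M hD hx'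
      simp only [sLvl] at heq
      have hs1 : sLvl M R hre m (Gm M R hre m x) ∈ XLevel n r R m := ih.mapsTo hu2
      have hs2 : sLvl M R hre m (Gm M R hre m x') ∈ XLevel n r R m := ih.mapsTo hu2'
      have hlen : (sLvl M R hre m (Gm M R hre m x)).length
          = (sLvl M R hre m (Gm M R hre m x')).length := length_eq_of_mem' hD hs1 hs2
      obtain ⟨e1, e2⟩ := List.append_inj heq hlen
      have hGeq : Gm M R hre m x = Gm M R hre m x' := ih.injOn hu2 hu2' e1
      rw [hGeq] at e2 hxF
      exact (hsel_spec M hD hu2').injOn hxF hxF' e2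
    · intro y hy
      obtain ⟨w, hw, hdec, hpm⟩ := exists_sigma_decomp hD hy
      obtain ⟨u, hu, hueq⟩ := ih.surjOn hpm
      obtain ⟨x, hxF, hxeq⟩ := (hsel_spec M hD hu).surjOn hw
      obtain ⟨hx1, hx2, hx3⟩ := mem_Fib_imp M hD hu hxF
      refine ⟨x, hx1, ?_⟩
      simp only [sLvl]
      rw [← hx3, hueq, hxeq]
      exact hdec.symm

/-- the level of a word -/
def lvlOf (n : ℕ → ℕ) (r : ℕ → ℝ) (R : ℝ) (x : List ℕ) : ℕ :=
  if h : ∃ m, x ∈ XLevel n r R m then h.choose else 0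

lemma lvlOf_eq (hD : MoranData d J n r R) {x : List ℕ} {m : ℕ} (hx : x ∈ XLevel n r R m) :
    lvlOf n r R x = m := by
  have hex : ∃ m, x ∈ XLevel n r R m := ⟨m, hx⟩
  have e : lvlOf n r R x = hex.choose := by simp only [lvlOf, dif_pos hex]
  rw [e]
  exact level_unique hD hex.choose_spec hx

/-- the global rearrangement bijection -/
def sigmaF (M : MoranStructure d J n r) (R : ℝ) (hre : Rearrangeable M R)
    (x : List ℕ) : List ℕ :=
  if x ∈ XV n r R then sLvl M R hre (lvlOf n r R x) x else x

lemma sigmaF_eq (hD : MoranData d J n r R) {x : List ℕ} {m : ℕ} (hx : x ∈ XLevel n r R m) :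
    sigmaF M R hre x = sLvl M R hre m x := by
  have hxv : x ∈ XV n r R := Set.mem_iUnion.mpr ⟨m, hx⟩
  simp only [sigmaF, if_pos hxv, lvlOf_eq hD hx]

lemma sigmaF_mem (hD : MoranData d J n r R) {x : List ℕ} {m : ℕ} (hx : x ∈ XLevel n r R m) :
    sigmaF M R hre x ∈ XLevel n r R m := by
  rw [sigmaF_eq M hD hx]
  exact (sLvl_bijOn M hD m).mapsTo hx

lemma sigmaF_bijOn (hD : MoranData d J n r R) :
    Set.BijOn (sigmaF M R hre) (XV n r R) (XV n r R) := by
  refine ⟨?_, ?_, ?_⟩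
  · intro x hx
    obtain ⟨m, hm⟩ := Set.mem_iUnion.mp hx
    exact Set.mem_iUnion.mpr ⟨m, sigmaF_mem M hD hm⟩
  · intro x hx y hy heq
    obtain ⟨m, hm⟩ := Set.mem_iUnion.mp hx
    obtain ⟨m', hm'⟩ := Set.mem_iUnion.mp hy
    rw [sigmaF_eq M hD hm, sigmaF_eq M hD hm'] at heq
    have h1 : sLvl M R hre m x ∈ XLevel n r R m := (sLvl_bijOn M hD m).mapsTo hm
    have h2 : sLvl M R hre m' y ∈ XLevel n r R m' := (sLvl_bijOn M hD m').mapsTo hm'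
    have : m = m' := level_unique hD h1 (heq ▸ h2)
    subst this
    exact (sLvl_bijOn M hD m).injOn hm hm' heq
  · intro y hy
    obtain ⟨m, hm⟩ := Set.mem_iUnion.mp hy
    obtain ⟨x, hx, hxeq⟩ := (sLvl_bijOn M hD m).surjOn hm
    exact ⟨x, Set.mem_iUnion.mpr ⟨m, hx⟩, by rw [sigmaF_eq M hD hx, hxeq]⟩

/-- ancestor at level `j` -/
def anc (n : ℕ → ℕ) (r : ℕ → ℝ) (R : ℝ) (j : ℕ) (x : List ℕ) : List ℕ :=
  (par n r R)^[lvlOf n r R x - j] x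

lemma par_iter_mem (hD : MoranData d J n r R) {x : List ℕ} {m : ℕ} (hx : x ∈ XLevel n r R m) :
    ∀ i, i ≤ m → (par n r R)^[i] x ∈ XLevel n r R (m - i) := by
  intro i
  induction i with
  | zero => intro _; simpa using hx
  | succ i ih =>
    intro hi
    rw [Function.iterate_succ_apply']
    have h1 := ih (by omega)
    have h2 := (par_spec hD (by omega : 1 ≤ m - i) h1).2
    have : m - i - 1 = m - (i+1) := by omega
    rwa [this] at h2

lemma anc_mem (hD : MoranData d J n r R) {x : List ℕ} {m : ℕ} (hx : x ∈ XLevel n r R m)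
    {j : ℕ} (hj : j ≤ m) : anc n r R j x ∈ XLevel n r R j := by
  have := par_iter_mem hD hx (m - j) (by omega)
  rw [anc, lvlOf_eq hD hx]
  have e : m - (m - j) = j := by omega
  rwa [e] at this

lemma anc_self (hD : MoranData d J n r R) {x : List ℕ} {m : ℕ} (hx : x ∈ XLevel n r R m) :
    anc n r R m x = x := by
  rw [anc, lvlOf_eq hD hx]
  simp

lemma par_anc (hD : MoranData d J n r R) {x : List ℕ} {m : ℕ} (hx : x ∈ XLevel n r R m)
    {j : ℕ} (hj : j + 1 ≤ m) : par n r R (anc n r R (j+1) x) = anc n r R j x := by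
  rw [anc, anc, lvlOf_eq hD hx]
  have e : m - j = (m - (j+1)) + 1 := by omega
  rw [e, Function.iterate_succ_apply']

lemma anc_anc (hD : MoranData d J n r R) {x : List ℕ} {m : ℕ} (hx : x ∈ XLevel n r R m)
    {i j : ℕ} (hij : i ≤ j) (hj : j ≤ m) :
    anc n r R i (anc n r R j x) = anc n r R i x := by
  have hja' : (par n r R)^[m - j] x ∈ XLevel n r R j := by
    have := anc_mem hD hx hj
    rwa [anc, lvlOf_eq hD hx] at this
  unfold anc
  rw [lvlOf_eq hD hx, lvlOf_eq hD hja', ← Function.iterate_add_apply]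
  congr 1
  omega

lemma anc_zero (hD : MoranData d J n r R) {x : List ℕ} {m : ℕ} (hx : x ∈ XLevel n r R m) :
    anc n r R 0 x = [] := by
  have := anc_mem hD hx (Nat.zero_le m)
  rwa [XLevel_zero, Set.mem_singleton_iff] at this

lemma anc_parent_edge (hD : MoranData d J n r R) {x : List ℕ} {m : ℕ}
    (hx : x ∈ XLevel n r R (m+1)) {j : ℕ} (hj : j ≤ m) :
    anc n r R j x = anc n r R j (par n r R x) := by
  have hpm : par n r R x ∈ XLevel n r R m := by
    have := (par_spec hD (by omega : 1 ≤ m+1) hx).2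
    simpa using this
  rw [anc, anc, lvlOf_eq hD hx, lvlOf_eq hD hpm]
  have e : m + 1 - j = (m - j) + 1 := by omega
  rw [e, Function.iterate_succ_apply]

lemma anc_reach (hD : MoranData d J n r R) {x y : List ℕ} {m : ℕ}
    (hx : x ∈ XLevel n r R m) (hy : y ∈ XLevel n r R m)
    (hr : (HorGraph M R).Reachable x y) {j : ℕ} (hj : j ≤ m) :
    (HorGraph M R).Reachable (anc n r R j x) (anc n r R j y) := by
  have key : ∀ i, (HorGraph M R).Reachable ((par n r R)^[i] x) ((par n r R)^[i] y) := by
    intro i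
    induction i with
    | zero => simpa using hr
    | succ i ih =>
      rw [Function.iterate_succ_apply', Function.iterate_succ_apply']
      exact reach_parent M hD ih
  rw [anc, anc, lvlOf_eq hD hx, lvlOf_eq hD hy]
  exact key (m - j)

lemma par_sLvl (hD : MoranData d J n r R) {x : List ℕ} {m : ℕ} (hx : x ∈ XLevel n r R (m+1)) :
    par n r R (sLvl M R hre (m+1) x) = sLvl M R hre m (Gm M R hre m x) := by
  obtain ⟨hu1, hxF, hu2⟩ := Gm_mem M hD hx
  have h1 : sLvl M R hre m (Gm M R hre m x) ∈ XLevel n r R m := (sLvl_bijOn M hD m).mapsTo hu2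
  have h2 : hsel M R hre m (Gm M R hre m x) x ∈ SigmaSet n r R m :=
    (hsel_spec M hD hu2).mapsTo hxF
  simp only [sLvl]
  exact par_append hD h1 h2

/-- ancestors of the image under `σ` are images of elements horizontally
equivalent to the ancestors -/
lemma sigma_anc (hD : MoranData d J n r R) {x : List ℕ} {m : ℕ} (hx : x ∈ XLevel n r R m) :
    ∀ k, k ≤ m → ∃ b, b ∈ XLevel n r R (m - k) ∧
      anc n r R (m - k) (sigmaF M R hre x) = sigmaF M R hre b ∧
      (HorGraph M R).Reachable b (anc n r R (m - k) x) := by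
  intro k
  induction k with
  | zero =>
    intro _
    refine ⟨x, by simpa using hx, ?_, ?_⟩
    · have hsx : sigmaF M R hre x ∈ XLevel n r R m := sigmaF_mem M hD hx
      simp only [Nat.sub_zero]
      rw [anc_self hD hsx]
    · simp only [Nat.sub_zero]
      rw [anc_self hD hx]
  | succ k ih =>
    intro hk
    obtain ⟨b', hb'mem, hb'eq, hb'r⟩ := ih (by omega)
    set j := m - (k+1) with hjdef
    have hmk : m - k = j + 1 := by omega
    rw [hmk] at hb'mem hb'eq hb'r
    have hsx : sigmaF M R hre x ∈ XLevel n r R m := sigmaF_mem M hD hx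
    obtain ⟨hgm1, hgmF, hgm2⟩ := Gm_mem M hD hb'mem
    refine ⟨Gm M R hre j b', by rwa [hjdef] at hgm2, ?_, ?_⟩
    · have e1 : anc n r R j (sigmaF M R hre x) = par n r R (anc n r R (j+1) (sigmaF M R hre x)) :=
        (par_anc hD hsx (by omega)).symm
      rw [e1, hb'eq]
      rw [sigmaF_eq M hD hb'mem]
      rw [par_sLvl M hD hb'mem]
      rw [← sigmaF_eq M hD hgm2]
    · -- Gm j b' ≈ anc j x
      have h1 : (HorGraph M R).Reachable (par n r R b') (Gm M R hre j b') := hgm1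
      have h2 : (HorGraph M R).Reachable (par n r R b') (par n r R (anc n r R (j+1) x)) :=
        reach_parent M hD hb'r
      have h3 : par n r R (anc n r R (j+1) x) = anc n r R j x := par_anc hD hx (by omega)
      rw [h3] at h2
      exact h1.symm.trans h2
end
end MoranPf
namespace MoranPf
open MoranPaper

attribute [local instance] Classical.propDecidable

noncomputable section
set_option linter.unusedSectionVars false

variable {d : ℕ} {J : Set (MoranPaper.Pt d)} {n : ℕ → ℕ} {r : ℕ → ℝ} {R : ℝ}

/-- the largest level at which the ancestors are `Rel`-related -/
def ellR (n : ℕ → ℕ) (r : ℕ → ℝ) (R : ℝ) (Rel : List ℕ → List ℕ → Prop)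
    (x y : List ℕ) : ℕ :=
  Nat.findGreatest (fun j => Rel (anc n r R j x) (anc n r R j y))
    (min (lvlOf n r R x) (lvlOf n r R y))

section Ell
variable {Rel : List ℕ → List ℕ → Prop}

lemma ellR_le_left (hD : MoranData d J n r R) {x y : List ℕ} {mx my : ℕ}
    (hx : x ∈ XLevel n r R mx) (hy : y ∈ XLevel n r R my) :
    ellR n r R Rel x y ≤ mx := by
  classical
  have := Nat.findGreatest_le (P := fun j => Rel (anc n r R j x) (anc n r R j y))
    (min (lvlOf n r R x) (lvlOf n r R y))
  rw [lvlOf_eq hD hx, lvlOf_eq hD hy] at this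
  simp only [ellR, lvlOf_eq hD hx, lvlOf_eq hD hy]
  omega

lemma ellR_le_right (hD : MoranData d J n r R) {x y : List ℕ} {mx my : ℕ}
    (hx : x ∈ XLevel n r R mx) (hy : y ∈ XLevel n r R my) :
    ellR n r R Rel x y ≤ my := by
  classical
  have := Nat.findGreatest_le (P := fun j => Rel (anc n r R j x) (anc n r R j y))
    (min (lvlOf n r R x) (lvlOf n r R y))
  rw [lvlOf_eq hD hx, lvlOf_eq hD hy] at this
  simp only [ellR, lvlOf_eq hD hx, lvlOf_eq hD hy]
  omega

lemma ellR_spec (hD : MoranData d J n r R) (h0 : Rel [] []) {x y : List ℕ} {mx my : ℕ}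
    (hx : x ∈ XLevel n r R mx) (hy : y ∈ XLevel n r R my) :
    Rel (anc n r R (ellR n r R Rel x y) x) (anc n r R (ellR n r R Rel x y) y) := by
  have hP0 : Rel (anc n r R 0 x) (anc n r R 0 y) := by
    rw [anc_zero hD hx, anc_zero hD hy]; exact h0
  classical
  have h := Nat.findGreatest_spec (P := fun j => Rel (anc n r R j x) (anc n r R j y))
    (n := min (lvlOf n r R x) (lvlOf n r R y)) (Nat.zero_le _) hP0
  exact h

lemma le_ellR (hD : MoranData d J n r R) {x y : List ℕ} {mx my : ℕ}
    (hx : x ∈ XLevel n r R mx) (hy : y ∈ XLevel n r R my) {j : ℕ}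
    (hjx : j ≤ mx) (hjy : j ≤ my) (h : Rel (anc n r R j x) (anc n r R j y)) :
    j ≤ ellR n r R Rel x y := by
  classical
  unfold ellR
  apply Nat.le_findGreatest _ h
  rw [lvlOf_eq hD hx, lvlOf_eq hD hy]
  omega

lemma ancrel (hD : MoranData d J n r R)
    (hcompat : ∀ u v, Rel u v → Rel (par n r R u) (par n r R v))
    {u v : List ℕ} {j : ℕ} (hu : u ∈ XLevel n r R j) (hv : v ∈ XLevel n r R j)
    (h : Rel u v) {i : ℕ} (hij : i ≤ j) :
    Rel (anc n r R i u) (anc n r R i v) := by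
  have key : ∀ k, Rel ((par n r R)^[k] u) ((par n r R)^[k] v) := by
    intro k
    induction k with
    | zero => simpa using h
    | succ k ih =>
      rw [Function.iterate_succ_apply', Function.iterate_succ_apply']
      exact hcompat _ _ ih
  rw [anc, anc, lvlOf_eq hD hu, lvlOf_eq hD hv]
  exact key (j - i)

lemma ellR_superadd (hD : MoranData d J n r R) (h0 : Rel [] [])
    (htrans : ∀ a b c, Rel a b → Rel b c → Rel a c)
    (hcompat : ∀ u v, Rel u v → Rel (par n r R u) (par n r R v))
    {x z y : List ℕ} {mx mz my : ℕ}
    (hx : x ∈ XLevel n r R mx) (hz : z ∈ XLevel n r R mz) (hy : y ∈ XLevel n r R my) :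
    ellR n r R Rel x z + ellR n r R Rel z y ≤ ellR n r R Rel x y + mz := by
  set a := ellR n r R Rel x z with hadef
  set b := ellR n r R Rel z y with hbdef
  set c := min a b with hcdef
  have hax : a ≤ mx := ellR_le_left hD hx hz
  have haz : a ≤ mz := ellR_le_right hD hx hz
  have hbz : b ≤ mz := ellR_le_left hD hz hy
  have hby : b ≤ my := ellR_le_right hD hz hy
  have h1 : Rel (anc n r R a x) (anc n r R a z) := ellR_spec hD h0 hx hz
  have h2 : Rel (anc n r R b z) (anc n r R b y) := ellR_spec hD h0 hz hy
  have h1' : Rel (anc n r R c x) (anc n r R c z) := by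
    have := ancrel hD hcompat (anc_mem hD hx hax) (anc_mem hD hz haz) h1
      (i := c) (by omega)
    rwa [anc_anc hD hx (by omega) hax, anc_anc hD hz (by omega) haz] at this
  have h2' : Rel (anc n r R c z) (anc n r R c y) := by
    have := ancrel hD hcompat (anc_mem hD hz hbz) (anc_mem hD hy hby) h2
      (i := c) (by omega)
    rwa [anc_anc hD hz (by omega) hbz, anc_anc hD hy (by omega) hby] at this
  have h3 : Rel (anc n r R c x) (anc n r R c y) := htrans _ _ _ h1' h2'
  have h4 : c ≤ ellR n r R Rel x y := le_ellR hD hx hy (by omega) (by omega) h3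
  omega

/-- generic lower bound for walks in graphs whose edges are vertical or
`Rel`-horizontal -/
lemma walk_lower (hD : MoranData d J n r R) (G' : SimpleGraph (List ℕ))
    (h0 : Rel [] [])
    (hrefl : ∀ z : List ℕ, z ∈ XV n r R → Rel z z)
    (htrans : ∀ a b c, Rel a b → Rel b c → Rel a c)
    (hcompat : ∀ u v, Rel u v → Rel (par n r R u) (par n r R v))
    (hAdj : ∀ u v, G'.Adj u v → ∃ mu mv, u ∈ XLevel n r R mu ∧ v ∈ XLevel n r R mv ∧
      ((mu = mv ∧ Rel u v) ∨ (mv = mu + 1 ∧ par n r R v = u) ∨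
        (mu = mv + 1 ∧ par n r R u = v))) :
    ∀ {x y : List ℕ} (p : G'.Walk x y) {mx my : ℕ},
      x ∈ XLevel n r R mx → y ∈ XLevel n r R my →
      mx + my ≤ p.length + 2 * ellR n r R Rel x y := by
  intro x y p
  induction p with
  | @nil x =>
    intro mx my hx hy
    have : mx = my := level_unique hD hx hy
    subst this
    have hxv : x ∈ XV n r R := Set.mem_iUnion.mpr ⟨mx, hx⟩
    have : mx ≤ ellR n r R Rel x x := by
      apply le_ellR hD hx hy (le_refl _) (le_refl _)
      rw [anc_self hD hx]
      exact hrefl x hxv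
    simp only [SimpleGraph.Walk.length_nil]
    omega
  | @cons x z y hxz q ih =>
    intro mx my hx hy
    obtain ⟨mu, mv, hxu, hzv, hcase⟩ := hAdj x z hxz
    have hmu : mu = mx := level_unique hD hxu hx
    subst hmu
    have hIH := ih hzv hy
    have hsup : ellR n r R Rel x z + ellR n r R Rel z y ≤ ellR n r R Rel x y + mv :=
      ellR_superadd hD h0 htrans hcompat hx hzv hy
    have hedge : mu + mv ≤ 1 + 2 * ellR n r R Rel x z := by
      rcases hcase with ⟨he, hrel⟩ | ⟨he, hpar⟩ | ⟨he, hpar⟩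
      · -- horizontal
        subst he
        have : mu ≤ ellR n r R Rel x z := by
          apply le_ellR hD hx hzv (le_refl _) (le_refl _)
          rw [anc_self hD hx, anc_self hD hzv]
          exact hrel
        omega
      · -- z is child of x
        have : mu ≤ ellR n r R Rel x z := by
          apply le_ellR hD hx hzv (le_refl _) (by omega)
          have e1 : anc n r R mu z = anc n r R mu (par n r R z) := by
            have hz' : z ∈ XLevel n r R (mu + 1) := by rwa [← he]
            exact anc_parent_edge hD hz' (le_refl _)
          rw [e1, hpar, anc_self hD hx]
          exact hrefl x (Set.mem_iUnion.mpr ⟨mu, hx⟩)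
        omega
      · -- x is child of z
        have : mv ≤ ellR n r R Rel x z := by
          apply le_ellR hD hx hzv (by omega) (le_refl _)
          have e1 : anc n r R mv x = anc n r R mv (par n r R x) := by
            have hx' : x ∈ XLevel n r R (mv + 1) := by rwa [← he]
            exact anc_parent_edge hD hx' (le_refl _)
          rw [e1, hpar, anc_self hD hzv]
          exact hrefl z (Set.mem_iUnion.mpr ⟨mv, hzv⟩)
        omega
    simp only [SimpleGraph.Walk.length_cons]
    omega

end Ell
end
end MoranPf
namespace MoranPf
open MoranPaper

attribute [local instance] Classical.propDecidable

noncomputable section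
set_option linter.unusedSectionVars false

variable {d : ℕ} {J : Set (MoranPaper.Pt d)} {n : ℕ → ℕ} {r : ℕ → ℝ} {R : ℝ}
variable (M : MoranStructure d J n r)

lemma tree_le_aug : TreeGraph n r R ≤ AugGraph M R := fun {u v} h => Or.inl h

lemma hor_le_aug : HorGraph M R ≤ AugGraph M R := fun {u v} h => Or.inr h

lemma exists_tree_walk (hD : MoranData d J n r R) {x : List ℕ} {m : ℕ}
    (hx : x ∈ XLevel n r R m) :
    ∀ k j, j + k = m → ∃ p : (TreeGraph n r R).Walk x (anc n r R j x), p.length = k := by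
  intro k
  induction k with
  | zero =>
    intro j hj
    have hjm : j = m := by omega
    subst hjm
    exact ⟨SimpleGraph.Walk.nil.copy rfl (anc_self hD hx).symm, by simp⟩
  | succ k ih =>
    intro j hj
    obtain ⟨p, hp⟩ := ih (j+1) (by omega)
    have hmem : anc n r R (j+1) x ∈ XLevel n r R (j+1) := anc_mem hD hx (by omega)
    have hip : IsParent n r R (par n r R (anc n r R (j+1) x)) (anc n r R (j+1) x) :=
      (par_spec hD (by omega) hmem).1
    rw [par_anc hD hx (by omega)] at hip
    have hadj : (TreeGraph n r R).Adj (anc n r R (j+1) x) (anc n r R j x) := Or.inr hip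
    exact ⟨p.concat hadj, by rw [SimpleGraph.Walk.length_concat, hp]⟩

lemma exists_tree_walk' (hD : MoranData d J n r R) {x : List ℕ} {m : ℕ}
    (hx : x ∈ XLevel n r R m) {j : ℕ} (hj : j ≤ m) :
    ∃ p : (TreeGraph n r R).Walk x (anc n r R j x), p.length = m - j :=
  exists_tree_walk hD hx (m - j) j (by omega)

lemma exists_hor_walk (hD : MoranData d J n r R) {L : ℕ}
    (hL : ∀ T, IsHCC M R T → T.Finite ∧ T.ncard ≤ L)
    {x y : List ℕ} {m : ℕ} (hx : x ∈ XLevel n r R m)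
    (hr : (HorGraph M R).Reachable x y) :
    ∃ p : (HorGraph M R).Walk x y, p.length ≤ L := by
  obtain ⟨p0⟩ := hr
  refine ⟨p0.bypass, ?_⟩
  have hpath := p0.bypass_isPath
  have hsupp : ∀ c ∈ p0.bypass.support, c ∈ Hcls M R x := fun c hc =>
    walk_support_reach p0 (p0.support_bypass_subset hc)
  have hfin : (Hcls M R x).Finite := (finite_XLevel hD m).subset (Hcls_subset M hD hx)
  have hnodup : p0.bypass.support.Nodup := hpath.support_nodup
  have hcard : p0.bypass.support.toFinset.card = p0.bypass.support.length :=
    List.toFinset_card_of_nodup hnodup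
  have hsub : p0.bypass.support.toFinset ⊆ hfin.toFinset := by
    intro c hc
    rw [Set.Finite.mem_toFinset]
    exact hsupp c (List.mem_toFinset.mp hc)
  have h1 : p0.bypass.support.toFinset.card ≤ hfin.toFinset.card := Finset.card_le_card hsub
  have h2 : (Hcls M R x).ncard = hfin.toFinset.card := Set.ncard_eq_toFinset_card _ hfin
  have h3 : (Hcls M R x).ncard ≤ L := (hL _ (Hcls_isHCC M hD hx)).2
  have h4 := p0.bypass.length_support
  omega

variable {hre : Rearrangeable M R}

lemma sigma_anc' (hD : MoranData d J n r R) {x : List ℕ} {m : ℕ} (hx : x ∈ XLevel n r R m)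
    {j : ℕ} (hj : j ≤ m) :
    ∃ b, b ∈ XLevel n r R j ∧ anc n r R j (sigmaF M R hre x) = sigmaF M R hre b ∧
      (HorGraph M R).Reachable b (anc n r R j x) := by
  obtain ⟨b, hb1, hb2, hb3⟩ := sigma_anc M hD hx (m - j) (by omega)
  have e : m - (m - j) = j := by omega
  rw [e] at hb1 hb2 hb3
  exact ⟨b, hb1, hb2, hb3⟩

lemma sigma_sib (hD : MoranData d J n r R) {b b' : List ℕ} {l : ℕ} (hl : 1 ≤ l)
    (hb : b ∈ XLevel n r R l) (hb' : b' ∈ XLevel n r R l)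
    (hr : (HorGraph M R).Reachable b b') :
    par n r R (sigmaF M R hre b) = par n r R (sigmaF M R hre b') := by
  obtain ⟨j, rfl⟩ : ∃ j, l = j + 1 := ⟨l - 1, by omega⟩
  rw [sigmaF_eq M hD hb, sigmaF_eq M hD hb', par_sLvl M hD hb, par_sLvl M hD hb',
    Gm_const M hD hb hr]

/-- the `σ`-images have a common ancestor one level below the horizontal
confluence level -/
lemma sigma_common_anc (hD : MoranData d J n r R) {x y : List ℕ} {mx my : ℕ}
    (hx : x ∈ XLevel n r R mx) (hy : y ∈ XLevel n r R my) :
    ∃ j, j + 1 ≥ ellR n r R (fun a b => (HorGraph M R).Reachable a b) x y ∧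
      j ≤ ellR n r R (fun a b => (HorGraph M R).Reachable a b) x y ∧
      anc n r R j (sigmaF M R hre x) = anc n r R j (sigmaF M R hre y) := by
  set l := ellR n r R (fun a b => (HorGraph M R).Reachable a b) x y with hldef
  have hlx : l ≤ mx := ellR_le_left hD hx hy
  have hly : l ≤ my := ellR_le_right hD hx hy
  have hrel : (HorGraph M R).Reachable (anc n r R l x) (anc n r R l y) :=
    ellR_spec hD (SimpleGraph.Reachable.refl _) hx hy
  have hsx : sigmaF M R hre x ∈ XLevel n r R mx := sigmaF_mem M hD hx
  have hsy : sigmaF M R hre y ∈ XLevel n r R my := sigmaF_mem M hD hy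
  rcases Nat.eq_zero_or_pos l with hl0 | hlpos
  · refine ⟨0, by omega, by omega, ?_⟩
    rw [anc_zero hD hsx, anc_zero hD hsy]
  · refine ⟨l - 1, by omega, by omega, ?_⟩
    obtain ⟨b, hb1, hb2, hb3⟩ := sigma_anc' M hD hx hlx
    obtain ⟨b', hb1', hb2', hb3'⟩ := sigma_anc' M hD hy hly
    have hbb : (HorGraph M R).Reachable b b' := (hb3.trans hrel).trans hb3'.symm
    have hsib : par n r R (sigmaF M R hre b) = par n r R (sigmaF M R hre b') :=
      sigma_sib M hD hlpos hb1 hb1' hbb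
    have e1 : anc n r R (l-1) (sigmaF M R hre x)
        = par n r R (anc n r R l (sigmaF M R hre x)) := by
      have := par_anc hD hsx (j := l - 1) (by omega)
      have e : l - 1 + 1 = l := by omega
      rw [e] at this
      exact this.symm
    have e2 : anc n r R (l-1) (sigmaF M R hre y)
        = par n r R (anc n r R l (sigmaF M R hre y)) := by
      have := par_anc hD hsy (j := l - 1) (by omega)
      have e : l - 1 + 1 = l := by omega
      rw [e] at this
      exact this.symm
    rw [e1, e2, hb2, hb2', hsib]

/-- the tree-confluence level of the `σ`-images is at most the horizontal
confluence level -/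
lemma ell_sigma_le (hD : MoranData d J n r R) {x y : List ℕ} {mx my : ℕ}
    (hx : x ∈ XLevel n r R mx) (hy : y ∈ XLevel n r R my) :
    ellR n r R Eq (sigmaF M R hre x) (sigmaF M R hre y)
      ≤ ellR n r R (fun a b => (HorGraph M R).Reachable a b) x y := by
  have hsx : sigmaF M R hre x ∈ XLevel n r R mx := sigmaF_mem M hD hx
  have hsy : sigmaF M R hre y ∈ XLevel n r R my := sigmaF_mem M hD hy
  set j := ellR n r R Eq (sigmaF M R hre x) (sigmaF M R hre y) with hjdef
  have hjx : j ≤ mx := ellR_le_left hD hsx hsy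
  have hjy : j ≤ my := ellR_le_right hD hsx hsy
  have hspec : anc n r R j (sigmaF M R hre x) = anc n r R j (sigmaF M R hre y) :=
    ellR_spec hD rfl hsx hsy
  obtain ⟨b, hb1, hb2, hb3⟩ := sigma_anc' M hD hx hjx
  obtain ⟨b', hb1', hb2', hb3'⟩ := sigma_anc' M hD hy hjy
  have hbeq : b = b' := by
    apply (sigmaF_bijOn M hD).injOn (Set.mem_iUnion.mpr ⟨j, hb1⟩)
      (Set.mem_iUnion.mpr ⟨j, hb1'⟩)
    rw [← hb2, ← hb2', hspec]
  have hrel : (HorGraph M R).Reachable (anc n r R j x) (anc n r R j y) := by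
    refine hb3.symm.trans ?_
    rw [hbeq]
    exact hb3'
  exact le_ellR hD hx hy hjx hjy hrel

end
end MoranPf
namespace MoranPf
open MoranPaper

attribute [local instance] Classical.propDecidable

noncomputable section
set_option linter.unusedSectionVars false

variable {d : ℕ} {J : Set (MoranPaper.Pt d)} {n : ℕ → ℕ} {r : ℕ → ℝ} {R : ℝ}
variable (M : MoranStructure d J n r)

lemma aug_hAdj (hD : MoranData d J n r R) : ∀ u v, (AugGraph M R).Adj u v →
    ∃ mu mv, u ∈ XLevel n r R mu ∧ v ∈ XLevel n r R mv ∧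
      ((mu = mv ∧ (HorGraph M R).Reachable u v) ∨
        (mv = mu + 1 ∧ par n r R v = u) ∨ (mu = mv + 1 ∧ par n r R u = v)) := by
  rintro u v (h | h)
  · rcases h with hp | hp
    · obtain ⟨hne, hpre, m, hm, hv, hu⟩ := hp
      exact ⟨m - 1, m, hu, hv, Or.inr (Or.inl ⟨by omega, par_eq hD ⟨hne, hpre, m, hm, hv, hu⟩⟩)⟩
    · obtain ⟨hne, hpre, m, hm, hu, hv⟩ := hp
      exact ⟨m, m - 1, hu, hv, Or.inr (Or.inr ⟨by omega, par_eq hD ⟨hne, hpre, m, hm, hu, hv⟩⟩)⟩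
  · obtain ⟨hne, m, hm, hu, hv, hJ⟩ := h
    refine ⟨m, m, hu, hv, Or.inl ⟨rfl, ?_⟩⟩
    have : (HorGraph M R).Adj u v := ⟨hne, m, hm, hu, hv, hJ⟩
    exact this.reachable

lemma tree_hAdj (hD : MoranData d J n r R) : ∀ u v, (TreeGraph n r R).Adj u v →
    ∃ mu mv, u ∈ XLevel n r R mu ∧ v ∈ XLevel n r R mv ∧
      ((mu = mv ∧ u = v) ∨
        (mv = mu + 1 ∧ par n r R v = u) ∨ (mu = mv + 1 ∧ par n r R u = v)) := by
  rintro u v (hp | hp)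
  · obtain ⟨hne, hpre, m, hm, hv, hu⟩ := hp
    exact ⟨m - 1, m, hu, hv, Or.inr (Or.inl ⟨by omega, par_eq hD ⟨hne, hpre, m, hm, hv, hu⟩⟩)⟩
  · obtain ⟨hne, hpre, m, hm, hu, hv⟩ := hp
    exact ⟨m, m - 1, hu, hv, Or.inr (Or.inr ⟨by omega, par_eq hD ⟨hne, hpre, m, hm, hu, hv⟩⟩)⟩

end
end MoranPf
/-- if the induced augmented tree is rearrangeable, there is a
near-isometry between `(X, 𝔈)` and `(X, 𝔈_v)`. -/
theorem MoranPaper.statement11 (d : ℕ) (J : Set (MoranPaper.Pt d)) (n : ℕ → ℕ) (r : ℕ → ℝ)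
    (R : ℝ) (hD : MoranPaper.MoranData d J n r R) (M : MoranPaper.MoranStructure d J n r)
    (hre : MoranPaper.Rearrangeable M R) :
    ∃ (σ : List ℕ → List ℕ) (c : ℕ),
      Set.BijOn σ (MoranPaper.XV n r R) (MoranPaper.XV n r R) ∧
      ∀ x ∈ MoranPaper.XV n r R, ∀ y ∈ MoranPaper.XV n r R,
        |((MoranPaper.TreeGraph n r R).dist (σ x) (σ y) : ℤ)
            - ((MoranPaper.AugGraph M R).dist x y : ℤ)| ≤ c := by
  classical
  obtain ⟨L, hL⟩ := hre.1
  refine ⟨MoranPf.sigmaF M R hre, L + 2, MoranPf.sigmaF_bijOn M hD, ?_⟩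
  intro x hx y hy
  obtain ⟨mx, hxm⟩ := Set.mem_iUnion.mp hx
  obtain ⟨my, hym⟩ := Set.mem_iUnion.mp hy
  set l := MoranPf.ellR n r R (fun a b => (MoranPaper.HorGraph M R).Reachable a b) x y
    with hldef
  have hlx : l ≤ mx := MoranPf.ellR_le_left hD hxm hym
  have hly : l ≤ my := MoranPf.ellR_le_right hD hxm hym
  have hrel : (MoranPaper.HorGraph M R).Reachable
      (MoranPf.anc n r R l x) (MoranPf.anc n r R l y) :=
    MoranPf.ellR_spec hD (SimpleGraph.Reachable.refl _) hxm hym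
  -- upper bound for the augmented distance
  obtain ⟨p1, hp1⟩ := MoranPf.exists_tree_walk' hD hxm hlx
  obtain ⟨p2, hp2⟩ := MoranPf.exists_hor_walk M hD hL (MoranPf.anc_mem hD hxm hlx) hrel
  obtain ⟨p3, hp3⟩ := MoranPf.exists_tree_walk' hD hym hly
  let q1 := p1.map (SimpleGraph.Hom.ofLE (MoranPf.tree_le_aug M))
  let q2 := p2.map (SimpleGraph.Hom.ofLE (MoranPf.hor_le_aug M))
  let q3 := (p3.map (SimpleGraph.Hom.ofLE (MoranPf.tree_le_aug M))).reverse
  let W : (MoranPaper.AugGraph M R).Walk x y := (q1.append q2).append q3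
  have hWlen : W.length = (mx - l) + p2.length + (my - l) := by
    simp only [W, q1, q2, q3, SimpleGraph.Walk.length_append,
      SimpleGraph.Walk.length_reverse, SimpleGraph.Walk.length_map, hp1, hp3]
  have hWle := SimpleGraph.dist_le W
  have hdub : (MoranPaper.AugGraph M R).dist x y ≤ (mx - l) + L + (my - l) := by omega
  have hreach : (MoranPaper.AugGraph M R).Reachable x y := ⟨W⟩
  obtain ⟨p, hplen⟩ := hreach.exists_walk_length_eq_dist
  have hdlb : mx + my ≤ (MoranPaper.AugGraph M R).dist x y + 2 * l := by
    have := MoranPf.walk_lower hD (MoranPaper.AugGraph M R)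
      (Rel := fun a b => (MoranPaper.HorGraph M R).Reachable a b)
      (SimpleGraph.Reachable.refl _) (fun z _ => SimpleGraph.Reachable.refl z)
      (fun a b c h1 h2 => h1.trans h2) (fun u v h => MoranPf.reach_parent M hD h)
      (MoranPf.aug_hAdj M hD) p hxm hym
    omega
  -- tree side
  obtain ⟨j, hj1, hj2, hjanc⟩ := MoranPf.sigma_common_anc M hD hxm hym
  have hsx : MoranPf.sigmaF M R hre x ∈ MoranPaper.XLevel n r R mx :=
    MoranPf.sigmaF_mem M hD hxm
  have hsy : MoranPf.sigmaF M R hre y ∈ MoranPaper.XLevel n r R my :=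
    MoranPf.sigmaF_mem M hD hym
  obtain ⟨t1, ht1⟩ := MoranPf.exists_tree_walk' hD hsx (le_trans hj2 hlx)
  obtain ⟨t3, ht3⟩ := MoranPf.exists_tree_walk' hD hsy (le_trans hj2 hly)
  let T : (MoranPaper.TreeGraph n r R).Walk (MoranPf.sigmaF M R hre x)
      (MoranPf.sigmaF M R hre y) :=
    t1.append ((t3.reverse).copy hjanc.symm rfl)
  have hTlen : T.length = (mx - j) + (my - j) := by
    simp only [T, SimpleGraph.Walk.length_append, SimpleGraph.Walk.length_copy,
      SimpleGraph.Walk.length_reverse, ht1, ht3]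
  have hTle := SimpleGraph.dist_le T
  have hreachT : (MoranPaper.TreeGraph n r R).Reachable (MoranPf.sigmaF M R hre x)
      (MoranPf.sigmaF M R hre y) := ⟨T⟩
  obtain ⟨t, htlen⟩ := hreachT.exists_walk_length_eq_dist
  have hconf_le : MoranPf.ellR n r R Eq (MoranPf.sigmaF M R hre x)
      (MoranPf.sigmaF M R hre y) ≤ l := MoranPf.ell_sigma_le M hD hxm hym
  have hdvlb : mx + my ≤ (MoranPaper.TreeGraph n r R).dist (MoranPf.sigmaF M R hre x)
      (MoranPf.sigmaF M R hre y)
      + 2 * MoranPf.ellR n r R Eq (MoranPf.sigmaF M R hre x) (MoranPf.sigmaF M R hre y) := by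
    have := MoranPf.walk_lower hD (MoranPaper.TreeGraph n r R) (Rel := Eq)
      rfl (fun z _ => rfl) (fun a b c h1 h2 => h1.trans h2)
      (fun u v h => by rw [h]) (MoranPf.tree_hAdj hD) t hsx hsy
    omega
  rw [abs_le]
  constructor
  · push_cast
    omega
  · push_cast
    omega
end

section
/- Let E be a Moran set whose induced augmented tree (X, 𝔈) is rearrangeable. Then E is totally disconnected in the Euclidean topology of ℝ^d. -/
open Metric Set Filter

attribute [local instance] Classical.propDecidable

noncomputable section Aux16

namespace MoranPaper

open SimpleGraph

variable {d : ℕ} {J : Set (Pt d)} {n : ℕ → ℕ} {r : ℕ → ℝ} {R : ℝ}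

section Data

variable (hD : MoranData d J n r R)
include hD

lemma aux_R_le (k : ℕ) : R ≤ r k := by
  rw [hD.R_inf]
  exact ciInf_le ⟨0, by rintro x ⟨k, rfl⟩; exact (hD.r_pos k).le⟩ k

lemma aux_R_lt_one : R < 1 := (aux_R_le hD 0).trans_lt (hD.r_lt_one 0)

lemma aux_r_le_half (k : ℕ) : r k ≤ 1 / 2 := by
  have h2 : (2 : ℝ) ≤ (n k : ℝ) := by exact_mod_cast hD.two_le k
  have h3 := hD.nr_le k
  nlinarith [hD.r_pos k]

lemma aux_prodR_pos (k : ℕ) : 0 < prodR r k :=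
  Finset.prod_pos fun j _ => hD.r_pos j

omit hD in
lemma aux_prodR_succ (k : ℕ) : prodR r (k + 1) = prodR r k * r k := by
  simp [prodR, Finset.prod_range_succ]

lemma aux_prodR_antitone {k l : ℕ} (h : k ≤ l) : prodR r l ≤ prodR r k := by
  induction l with
  | zero => simpa [Nat.le_zero.1 h]
  | succ l ih =>
    rcases Nat.lt_or_ge k (l + 1) with h' | h'
    · have := ih (by omega)
      rw [aux_prodR_succ]
      nlinarith [aux_prodR_pos hD l, hD.r_pos l, (hD.r_lt_one l).le]
    · have : k = l + 1 := by omega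
      simp [this]

lemma aux_prodR_le_pow (k : ℕ) : prodR r k ≤ (1 / 2) ^ k := by
  calc prodR r k ≤ ∏ _j ∈ Finset.range k, (1 / 2 : ℝ) :=
        Finset.prod_le_prod (fun j _ => (hD.r_pos j).le) (fun j _ => aux_r_le_half hD j)
    _ = (1 / 2) ^ k := by rw [Finset.prod_const, Finset.card_range]

lemma aux_exists_level (m : ℕ) (hm : 1 ≤ m) :
    ∃ k, 1 ≤ k ∧ prodR r k ≤ R ^ m ∧ R ^ m < prodR r (k - 1) := by
  have hRm : 0 < R ^ m := pow_pos hD.R_pos m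
  have hex : ∃ k, prodR r k ≤ R ^ m := by
    obtain ⟨k, hk⟩ := exists_pow_lt_of_lt_one hRm (by norm_num : (1 : ℝ) / 2 < 1)
    exact ⟨k, (aux_prodR_le_pow hD k).trans hk.le⟩
  classical
  have hk : prodR r (Nat.find hex) ≤ R ^ m := Nat.find_spec hex
  have hk1 : 1 ≤ Nat.find hex := by
    rcases Nat.eq_zero_or_pos (Nat.find hex) with h | h
    · exfalso
      have h1 : prodR r 0 ≤ R ^ m := h ▸ hk
      have : R ^ m < 1 := pow_lt_one₀ hD.R_pos.le (aux_R_lt_one hD) (by omega)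
      simp [prodR] at h1
      linarith
    · exact h
  exact ⟨Nat.find hex, hk1, hk,
    not_le.1 (Nat.find_min hex (show Nat.find hex - 1 < Nat.find hex by omega))⟩

lemma aux_sandwich_unique {x : ℝ} {k k' : ℕ} (hk : 1 ≤ k) (hk' : 1 ≤ k')
    (h1 : prodR r k ≤ x) (h2 : x < prodR r (k - 1))
    (h1' : prodR r k' ≤ x) (h2' : x < prodR r (k' - 1)) : k = k' := by
  by_contra hne
  rcases Nat.lt_or_ge k k' with h | h
  · have := aux_prodR_antitone hD (show k ≤ k' - 1 by omega)
    linarith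
  · have hlt : k' < k := by omega
    have := aux_prodR_antitone hD (show k' ≤ k - 1 by omega)
    linarith

omit hD

lemma aux_mem_XLevel_iff {m : ℕ} (hm : 1 ≤ m) {w : List ℕ} :
    w ∈ XLevel n r R m ↔
      IsWord n w ∧ prodR r w.length ≤ R ^ m ∧ R ^ m < prodR r (w.length - 1) := by
  unfold XLevel
  rw [if_neg (by omega)]
  rfl

include hD

lemma aux_len_pos_of_mem {m : ℕ} (hm : 1 ≤ m) {w : List ℕ}
    (hw : w ∈ XLevel n r R m) : 1 ≤ w.length := by
  obtain ⟨-, h1, -⟩ := (aux_mem_XLevel_iff hm).1 hw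
  by_contra h
  have h0 : w.length = 0 := by omega
  rw [h0] at h1
  simp [prodR] at h1
  have : R ^ m < 1 := pow_lt_one₀ hD.R_pos.le (aux_R_lt_one hD) (by omega)
  linarith

lemma aux_level_unique {m m' : ℕ} (hm : 1 ≤ m) (hm' : 1 ≤ m') {w : List ℕ}
    (h : w ∈ XLevel n r R m) (h' : w ∈ XLevel n r R m') : m = m' := by
  have key : ∀ a b : ℕ, 1 ≤ a → a < b →
      w ∈ XLevel n r R a → w ∈ XLevel n r R b → False := by
    intro a b ha hab hwa hwb
    obtain ⟨-, h1, h2⟩ := (aux_mem_XLevel_iff ha).1 hwa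
    obtain ⟨-, h1', h2'⟩ := (aux_mem_XLevel_iff (by omega : 1 ≤ b)).1 hwb
    have hl : 1 ≤ w.length := aux_len_pos_of_mem hD ha hwa
    have hprod : prodR r w.length = prodR r (w.length - 1) * r (w.length - 1) := by
      conv_lhs => rw [show w.length = (w.length - 1) + 1 by omega]
      exact aux_prodR_succ (w.length - 1)
    have hRb : R ^ b ≤ R ^ (a + 1) :=
      pow_le_pow_of_le_one hD.R_pos.le (aux_R_lt_one hD).le (by omega)
    have hpow : R ^ (a + 1) = R ^ a * R := by rw [pow_succ]
    have hRr : R ≤ r (w.length - 1) := aux_R_le hD _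
    have hstep : R ^ a * R < prodR r (w.length - 1) * r (w.length - 1) := by
      have hRpos : 0 < R := hD.R_pos
      have hpa : 0 < R ^ a := pow_pos hRpos a
      nlinarith
    rw [← hprod] at hstep
    rw [hpow] at hRb
    linarith
  by_contra hne
  rcases Nat.lt_or_ge m m' with h'' | h''
  · exact key m m' hm h'' h h'
  · exact key m' m hm' (by omega) h' h

lemma aux_moranSet_subset (M : MoranStructure d J n r) {m : ℕ} (hm : 1 ≤ m) :
    MoranSet M ⊆ ⋃ u ∈ XLevel n r R m, M.Jset u := by
  intro x hx
  obtain ⟨k, hk1, hk2, hk3⟩ := aux_exists_level hD m hm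
  have hx' : x ∈ ⋃ w ∈ WordsLen n k, M.Jset w := Set.mem_iInter.1 hx k
  obtain ⟨w, hw, hxw⟩ := Set.mem_iUnion₂.1 hx'
  obtain ⟨hword, hlen⟩ := hw
  exact Set.mem_biUnion
    ((aux_mem_XLevel_iff hm).2 ⟨hword, by rw [hlen]; exact hk2, by rw [hlen]; exact hk3⟩) hxw

omit hD

lemma aux_isWord_append {w : List ℕ} {a : ℕ} (h : IsWord n (w ++ [a])) :
    IsWord n w ∧ 1 ≤ a ∧ a ≤ n w.length := by
  refine ⟨?_, ?_⟩
  · intro j hj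
    have hj' : j < (w ++ [a]).length := by simp; omega
    have h2 := h j hj'
    have hget : (w ++ [a]).get ⟨j, hj'⟩ = w.get ⟨j, hj⟩ := by
      simp [List.get_eq_getElem, List.getElem_append_left hj]
    rwa [hget] at h2
  · have hlen : w.length < (w ++ [a]).length := by simp
    have h2 := h w.length hlen
    have hget : (w ++ [a]).get ⟨w.length, hlen⟩ = a := by
      simp [List.get_eq_getElem]
    rwa [hget] at h2

lemma aux_diam_eq (M : MoranStructure d J n r) :
    ∀ w : List ℕ, IsWord n w →
      Metric.diam (M.Jset w) = prodR r w.length * Metric.diam J := by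
  intro w
  induction w using List.reverseRecOn with
  | nil => intro _; simp [M.root_eq, prodR]
  | append_singleton w a ih =>
    intro hw
    obtain ⟨hw', ha1, ha2⟩ := aux_isWord_append hw
    rw [M.diam_ratio w hw' a ha1 ha2, ih hw']
    have : (w ++ [a]).length = w.length + 1 := by simp
    rw [this, aux_prodR_succ]
    ring

include hD

lemma aux_isCompact_Jset (M : MoranStructure d J n r) {w : List ℕ} (hw : IsWord n w) :
    IsCompact (M.Jset w) := by
  obtain ⟨S, c, hc, hdist, him⟩ := M.similar w hw
  have hlip : LipschitzWith (Real.toNNReal c) S :=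
    LipschitzWith.of_dist_le_mul fun x y => by
      rw [hdist, Real.coe_toNNReal c hc.le]
  rw [him]
  exact hD.compact.image hlip.continuous

omit hD

lemma aux_finite_lists (N : ℕ) :
    ∀ k, {w : List ℕ | w.length = k ∧ ∀ x ∈ w, x ≤ N}.Finite := by
  intro k
  induction k with
  | zero =>
    apply Set.Finite.subset (Set.finite_singleton ([] : List ℕ))
    rintro w ⟨h, -⟩
    simp [List.length_eq_zero_iff.1 h]
  | succ k ih =>
    have hsub : {w : List ℕ | w.length = k + 1 ∧ ∀ x ∈ w, x ≤ N} ⊆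
        (fun p : ℕ × List ℕ => p.1 :: p.2) ''
          ((Set.Iic N) ×ˢ {w : List ℕ | w.length = k ∧ ∀ x ∈ w, x ≤ N}) := by
      rintro w ⟨hlen, hx⟩
      cases w with
      | nil => simp at hlen
      | cons a t =>
        refine ⟨(a, t), ⟨hx a (by simp), ?_, fun x hx' => hx x (by simp [hx'])⟩, rfl⟩
        simpa using hlen
    exact Set.Finite.subset (((Set.finite_Iic N).prod ih).image _) hsub

lemma aux_wordsLen_finite (k : ℕ) : (WordsLen n k).Finite := by
  apply Set.Finite.subset (aux_finite_lists ((Finset.range k).sup n) k)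
  rintro w ⟨hw, hlen⟩
  refine ⟨hlen, fun x hx => ?_⟩
  obtain ⟨j, hj⟩ := List.mem_iff_get.1 hx
  have := (hw j j.2).2
  rw [hj] at this
  exact this.trans (Finset.le_sup (Finset.mem_range.2 (hlen ▸ j.2)))

include hD

lemma aux_xLevel_finite {m : ℕ} (hm : 1 ≤ m) : (XLevel n r R m).Finite := by
  obtain ⟨k, hk1, hk2, hk3⟩ := aux_exists_level hD m hm
  apply Set.Finite.subset (aux_wordsLen_finite (n := n) k)
  intro w hw
  obtain ⟨hword, h1, h2⟩ := (aux_mem_XLevel_iff hm).1 hw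
  exact ⟨hword,
    aux_sandwich_unique hD (aux_len_pos_of_mem hD hm hw) hk1 h1 h2 hk2 hk3⟩

lemma aux_Ehor_mem (M : MoranStructure d J n r) {m : ℕ} (hm : 1 ≤ m) {a b : List ℕ}
    (h : Ehor M R a b) (ha : a ∈ XLevel n r R m) :
    b ∈ XLevel n r R m ∧ (M.Jset a ∩ M.Jset b).Nonempty := by
  obtain ⟨hne, m', hm', ha', hb', hJ⟩ := h
  have : m = m' := aux_level_unique hD hm hm' ha ha'
  exact ⟨this ▸ hb', hJ⟩

lemma aux_walk_support_mem (M : MoranStructure d J n r) {m : ℕ} (hm : 1 ≤ m) :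
    ∀ {u v : List ℕ} (W : (HorGraph M R).Walk u v), u ∈ XLevel n r R m →
      ∀ z ∈ W.support, z ∈ XLevel n r R m := by
  intro u v W
  induction W with
  | nil =>
    intro hu z hz
    rw [SimpleGraph.Walk.support_nil] at hz
    rcases List.mem_singleton.1 hz with rfl
    exact hu
  | @cons a b c h W ih =>
    intro ha z hz
    have hb : b ∈ XLevel n r R m := (aux_Ehor_mem hD M hm h ha).1
    rw [SimpleGraph.Walk.support_cons] at hz
    rcases List.mem_cons.1 hz with rfl | hz
    · exact ha
    · exact ih hb z hz

lemma aux_walk_dist (M : MoranStructure d J n r) {m : ℕ} (hm : 1 ≤ m) :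
    ∀ {u v : List ℕ} (W : (HorGraph M R).Walk u v), u ∈ XLevel n r R m →
      ∀ p ∈ M.Jset u, ∀ q ∈ M.Jset v,
        dist p q ≤ (W.length + 1 : ℝ) * (R ^ m * Metric.diam J) := by
  have hnonneg : (0 : ℝ) ≤ R ^ m * Metric.diam J :=
    mul_nonneg (pow_nonneg hD.R_pos.le m) Metric.diam_nonneg
  intro u v W
  induction W with
  | nil =>
    intro hu p hp q hq
    obtain ⟨hword, hle, -⟩ := (aux_mem_XLevel_iff hm).1 hu
    have hb := mul_le_mul_of_nonneg_right hle (Metric.diam_nonneg (s := J))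
    rw [← aux_diam_eq M _ hword] at hb
    have hdle := (Metric.dist_le_diam_of_mem
      (aux_isCompact_Jset hD M hword).isBounded hp hq).trans hb
    simp only [SimpleGraph.Walk.length_nil]
    push_cast
    linarith
  | @cons a b c h W ih =>
    intro ha p hp q hq
    obtain ⟨hb, z, hza, hzb⟩ := aux_Ehor_mem hD M hm h ha
    obtain ⟨hword, hle, -⟩ := (aux_mem_XLevel_iff hm).1 ha
    have hda := mul_le_mul_of_nonneg_right hle (Metric.diam_nonneg (s := J))
    rw [← aux_diam_eq M _ hword] at hda
    have h1 : dist p z ≤ R ^ m * Metric.diam J :=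
      (Metric.dist_le_diam_of_mem (aux_isCompact_Jset hD M hword).isBounded hp hza).trans hda
    have h2 := ih hb z hzb q hq
    have h3 := dist_triangle p z q
    simp only [SimpleGraph.Walk.length_cons]
    push_cast
    push_cast at h2
    linarith
  omit hD

lemma aux_reachable_induce {V : Type*} (G : SimpleGraph V) (S : Set V) :
    ∀ {x y : V} (W : G.Walk x y) (hx : x ∈ S) (hy : y ∈ S),
      (∀ z ∈ W.support, z ∈ S) → (G.induce S).Reachable ⟨x, hx⟩ ⟨y, hy⟩ := by
  intro x y W
  induction W with
  | nil => intro hx hy _; rfl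
  | @cons a b c h W ih =>
    intro hx hy hs
    have hb : b ∈ S := hs b (by simp [SimpleGraph.Walk.support_cons])
    have hadj : (G.induce S).Adj ⟨a, hx⟩ ⟨b, hb⟩ := h
    exact hadj.reachable.trans
      (ih hb hy fun z hz => hs z (by simp [SimpleGraph.Walk.support_cons, hz]))

/-- The forgetful homomorphism from an induced subgraph. -/
def auxInduceHom {V : Type*} (G : SimpleGraph V) (S : Set V) : G.induce S →g G :=
  ⟨Subtype.val, fun h => h⟩

include hD

lemma aux_key (M : MoranStructure d J n r) (hre : Rearrangeable M R)
    {t : Set (Pt d)} (ht : t ⊆ MoranSet M) (htc : IsPreconnected t)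
    {p q : Pt d} (hp : p ∈ t) (hq : q ∈ t) : p = q := by
  classical
  obtain ⟨L, hL⟩ := hre.1
  by_contra hpq
  have hdpos : 0 < dist p q := dist_pos.2 hpq
  -- choose a level m
  have htend : Tendsto (fun m : ℕ => (L : ℝ) * (R ^ m * Metric.diam J)) atTop (nhds 0) := by
    have h1 : Tendsto (fun m : ℕ => R ^ m) atTop (nhds 0) :=
      tendsto_pow_atTop_nhds_zero_of_lt_one hD.R_pos.le (aux_R_lt_one hD)
    have h2 := (h1.mul_const (Metric.diam J)).const_mul (L : ℝ)
    simpa using h2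
  obtain ⟨m, hmlt, hm1⟩ :=
    ((htend.eventually_lt_const hdpos).and (eventually_ge_atTop 1)).exists
  -- the level Γ and the component S of u0
  obtain ⟨u0, hu0Γ, hpu0⟩ := Set.mem_iUnion₂.1 (aux_moranSet_subset hD M hm1 (ht hp))
  set G := HorGraph M R with hG
  set S : Set (List ℕ) := {v | G.Reachable u0 v} with hSdef
  have hu0S : u0 ∈ S := SimpleGraph.Reachable.refl u0
  have hSsub : S ⊆ XLevel n r R m := by
    rintro v ⟨W⟩
    exact aux_walk_support_mem hD M hm1 W hu0Γ v W.end_mem_support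
  have hSmem : ∀ v ∈ S, G.Reachable u0 v := fun v hv => hv
  -- S is a horizontal connected component
  have hconn : ((HorGraph M R).induce S).Connected := by
    rw [SimpleGraph.connected_iff]
    constructor
    · rintro ⟨x, hx⟩ ⟨y, hy⟩
      obtain ⟨W⟩ := (hSmem x hx).symm.trans (hSmem y hy)
      exact aux_reachable_induce G S W hx hy fun z hz =>
        (hSmem x hx).trans ⟨W.takeUntil z hz⟩
    · exact ⟨⟨u0, hu0S⟩⟩
  have hmax : ∀ T', S ⊆ T' → T' ⊆ XLevel n r R m →
      ((HorGraph M R).induce T').Connected → T' = S := by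
    intro T' hST' hT'Γ hT'conn
    refine Set.Subset.antisymm (fun v hv => ?_) hST'
    have hreach := hT'conn.preconnected ⟨u0, hST' hu0S⟩ ⟨v, hv⟩
    have := hreach.map (auxInduceHom G T')
    exact this
  have hHCC : IsHCC M R S := ⟨m, hSsub, hconn, hmax⟩
  obtain ⟨hSfin, hSL⟩ := hL S hHCC
  -- closed sets K1 K2
  set K1 : Set (Pt d) := ⋃ u ∈ S, M.Jset u with hK1def
  set K2 : Set (Pt d) := ⋃ u ∈ XLevel n r R m \ S, M.Jset u with hK2def
  have hword : ∀ u ∈ XLevel n r R m, IsWord n u := fun u hu =>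
    ((aux_mem_XLevel_iff hm1).1 hu).1
  have hK1c : IsClosed K1 :=
    hSfin.isClosed_biUnion fun u hu =>
      (aux_isCompact_Jset hD M (hword u (hSsub hu))).isClosed
  have hK2c : IsClosed K2 :=
    ((aux_xLevel_finite hD hm1).diff : (XLevel n r R m \ S).Finite).isClosed_biUnion fun u hu =>
      (aux_isCompact_Jset hD M (hword u hu.1)).isClosed
  have hdisj : Disjoint K1 K2 := by
    rw [Set.disjoint_left]
    rintro x hx1 hx2
    obtain ⟨u, hu, hxu⟩ := Set.mem_iUnion₂.1 hx1
    obtain ⟨v, hv, hxv⟩ := Set.mem_iUnion₂.1 hx2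
    have hne : u ≠ v := fun h => hv.2 (h ▸ hu)
    have hadj : G.Adj u v := ⟨hne, m, hm1, hSsub hu, hv.1, ⟨x, hxu, hxv⟩⟩
    exact hv.2 ((hSmem u hu).trans hadj.reachable)
  obtain ⟨U, V, hUo, hVo, hK1U, hK2V, hUV⟩ := normal_separation hK1c hK2c hdisj
  have htUV : t ⊆ U ∪ V := by
    intro x hx
    obtain ⟨u, hu, hxu⟩ := Set.mem_iUnion₂.1 (aux_moranSet_subset hD M hm1 (ht hx))
    by_cases hus : u ∈ S
    · exact Or.inl (hK1U (Set.mem_biUnion hus hxu))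
    · exact Or.inr (hK2V (Set.mem_biUnion ⟨hu, hus⟩ hxu))
  have htU : t ⊆ U := by
    rcases htc.subset_or_subset hUo hVo hUV htUV with h | h
    · exact h
    · exfalso
      have hpU : p ∈ U := hK1U (Set.mem_biUnion hu0S hpu0)
      exact Set.disjoint_left.1 hUV hpU (h hp)
  -- q lies in a piece indexed by S
  obtain ⟨v, hvΓ, hqv⟩ := Set.mem_iUnion₂.1 (aux_moranSet_subset hD M hm1 (ht hq))
  have hvS : v ∈ S := by
    by_contra hvS
    have hqV : q ∈ V := hK2V (Set.mem_biUnion ⟨hvΓ, hvS⟩ hqv)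
    exact Set.disjoint_left.1 hUV (htU hq) hqV
  -- walk bound
  obtain ⟨W0⟩ := hSmem v hvS
  set P := W0.toPath with hPdef
  have hsupp : ∀ z ∈ (P : G.Walk u0 v).support, z ∈ S := fun z hz =>
    ⟨W0.takeUntil z (SimpleGraph.Walk.support_toPath_subset W0 hz)⟩
  have hnodup : (P : G.Walk u0 v).support.Nodup := P.2.support_nodup
  have hcard : (P : G.Walk u0 v).length + 1 ≤ L := by
    have h1 : (P : G.Walk u0 v).support.toFinset.card
        = (P : G.Walk u0 v).support.length :=
      List.toFinset_card_of_nodup hnodup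
    have h2 : (P : G.Walk u0 v).support.toFinset ⊆ hSfin.toFinset := by
      intro z hz
      exact (Set.Finite.mem_toFinset _).2 (hsupp z (List.mem_toFinset.1 hz))
    have h3 := Finset.card_le_card h2
    rw [h1, SimpleGraph.Walk.length_support] at h3
    have h4 : S.ncard = hSfin.toFinset.card := Set.ncard_eq_toFinset_card S hSfin
    omega
  have hbound := aux_walk_dist hD M hm1 (P : G.Walk u0 v) hu0Γ p hpu0 q hqv
  have hnonneg : (0 : ℝ) ≤ R ^ m * Metric.diam J :=
    mul_nonneg (pow_nonneg hD.R_pos.le m) Metric.diam_nonneg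
  have hLL : ((P : G.Walk u0 v).length + 1 : ℝ) * (R ^ m * Metric.diam J)
      ≤ (L : ℝ) * (R ^ m * Metric.diam J) := by
    apply mul_le_mul_of_nonneg_right _ hnonneg
    exact_mod_cast hcard
  linarith

end Data

end MoranPaper

end Aux16

/-- a Moran set whose induced augmented tree is rearrangeable is totally
disconnected in the Euclidean topology. -/
theorem MoranPaper.statement16 (d : ℕ) (J : Set (MoranPaper.Pt d)) (n : ℕ → ℕ) (r : ℕ → ℝ)
    (R : ℝ) (hD : MoranPaper.MoranData d J n r R) (M : MoranPaper.MoranStructure d J n r)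
    (hre : MoranPaper.Rearrangeable M R) :
    IsTotallyDisconnected (MoranPaper.MoranSet M) := by
  intro t hts htc x hx y hy
  exact MoranPaper.aux_key hD M hre hts htc hx hy
end
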